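/- arXiv:1907.13023 — 6 statements merged into one kernel-verified Lean document; each statement's English description precedes it below -/
import Mathlib

section
/- For all x, y, u ∈ E and every τ > 0, −(1/τ)·⟨∇²f(x)u, u⟩ − τ^ν·H_{f,3}(ν)·‖y − x‖^{1+ν}·‖u‖² ≤ D³f(x)[y−x, u, u] ≤ (1/τ)·⟨∇²f(x)u, u⟩ + τ^ν·H_{f,3}(ν)·‖y − x‖^{1+ν}·‖u‖². -/
open scoped InnerProductSpace
open Set

private lemma deriv_nonneg_of_monotone' {g : ℝ → ℝ} (hg : Monotone g) {c : ℝ}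
    (h : HasDerivAt g c 0) : 0 ≤ c := by
  have ht := hasDerivAt_iff_tendsto_slope.mp h
  refine ge_of_tendsto ht ?_
  filter_upwards [self_mem_nhdsWithin] with t ht'
  have htne : t ≠ 0 := ht'
  rw [slope_def_field]
  rcases lt_or_gt_of_ne htne with h1 | h1
  · have hle : g t ≤ g 0 := hg h1.le
    exact div_nonneg_iff.mpr (Or.inr ⟨by linarith, by linarith⟩)
  · have hle : g 0 ≤ g t := hg h1.le
    exact div_nonneg (by linarith) (by linarith)

private lemma hessian_nonneg' {E : Type*} [NormedAddCommGroup E] [InnerProductSpace ℝ E]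
    (f : E → ℝ) (hf : ContDiff ℝ 3 f) (hconv : ConvexOn ℝ Set.univ f) (z u : E) :
    0 ≤ iteratedFDeriv ℝ 2 f z ![u, u] := by
  set L : ℝ → E := fun s => s • u + z with hL
  have hLd : ∀ s : ℝ, HasDerivAt L u s := by
    intro s
    simpa [hL] using ((hasDerivAt_id s).smul_const u).add_const z
  have hf1 : Differentiable ℝ f := hf.differentiable (by norm_num)
  have hφ' : ∀ s : ℝ, HasDerivAt (fun s => f (L s)) (fderiv ℝ f (L s) u) s := by
    intro s
    exact (hf1 (L s)).hasFDerivAt.comp_hasDerivAt s (hLd s)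
  have hφconv : ConvexOn ℝ Set.univ (fun s => f (L s)) := by
    have h1 := hconv.comp_affineMap (AffineMap.lineMap z (z + u))
    have h2 : (f ∘ (AffineMap.lineMap z (z + u))) = fun s => f (L s) := by
      funext s
      simp [AffineMap.lineMap_apply, hL, add_sub_cancel_left]
    rw [h2, Set.preimage_univ] at h1
    exact h1
  have hmono : Monotone (deriv (fun s => f (L s))) := by
    rw [← monotoneOn_univ]
    exact hφconv.monotoneOn_deriv fun s _ => (hφ' s).differentiableAt
  have hd : deriv (fun s => f (L s)) = fun s => fderiv ℝ f (L s) u := by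
    funext s; exact (hφ' s).deriv
  rw [hd] at hmono
  have hf2 : ContDiff ℝ 2 (fderiv ℝ f) := hf.fderiv_right (by norm_num)
  have hDD : HasFDerivAt (fderiv ℝ f) (fderiv ℝ (fderiv ℝ f) z) z :=
    (hf2.differentiable (by norm_num) z).hasFDerivAt
  have hL0 : L 0 = z := by simp [hL]
  have hg1 : HasDerivAt (fun s => fderiv ℝ f (L s) u)
      (fderiv ℝ (fderiv ℝ f) z u u) 0 := by
    have houter := (ContinuousLinearMap.apply ℝ ℝ u).hasFDerivAt.comp z hDD
    rw [← hL0] at houter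
    have hcomp := houter.comp_hasDerivAt 0 (hLd 0)
    rw [hL0] at hcomp
    exact hcomp
  have hc := deriv_nonneg_of_monotone' hmono hg1
  rwa [iteratedFDeriv_two_apply, Matrix.cons_val_zero, Matrix.cons_val_one, Matrix.cons_val_zero]

private lemma key' {E : Type*} [NormedAddCommGroup E] [InnerProductSpace ℝ E]
    (ν Hf : ℝ) (hν : ν ∈ Set.Icc (0 : ℝ) 1) (hHf : 0 < Hf)
    (f : E → ℝ) (hf : ContDiff ℝ 3 f) (hconv : ConvexOn ℝ Set.univ f)
    (hHolder : ∀ x y : E,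
      ‖iteratedFDeriv ℝ 3 f x - iteratedFDeriv ℝ 3 f y‖ ≤ Hf * ‖x - y‖ ^ ν)
    (x u h : E) (τ : ℝ) (hτ : 0 < τ) :
    -((1 / τ) * iteratedFDeriv ℝ 2 f x ![u, u]
        + τ ^ ν * Hf * ‖h‖ ^ (1 + ν) * ‖u‖ ^ 2)
      ≤ iteratedFDeriv ℝ 3 f x ![h, u, u] := by
  obtain ⟨hν0, hν1⟩ := hν
  set F := iteratedFDeriv ℝ 2 f with hFdef
  have hF : ContDiff ℝ 1 F := hf.iteratedFDeriv_right (by norm_num)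
  set L : ℝ → E := fun t => t • h + x with hLdef
  have hLd : ∀ t : ℝ, HasDerivAt L h t := fun t => by
    simpa [hLdef] using ((hasDerivAt_id t).smul_const h).add_const x
  have hL0 : L 0 = x := by simp [hLdef]
  set c : ℝ := iteratedFDeriv ℝ 3 f x ![h, u, u] with hc
  set g : ℝ → ℝ := fun t => F (L t) ![u, u] with hgdef
  have hg : ∀ t : ℝ, HasDerivAt g (iteratedFDeriv ℝ 3 f (L t) ![h, u, u]) t := by
    intro t
    have hFd : HasFDerivAt F (fderiv ℝ F (L t)) (L t) :=
      (hF.differentiable one_ne_zero (L t)).hasFDerivAt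
    have houter :=
      (ContinuousMultilinearMap.apply ℝ (fun _ : Fin 2 => E) ℝ ![u, u]).hasFDerivAt.comp
        (L t) hFd
    have hcomp := houter.comp_hasDerivAt t (hLd t)
    have hval : iteratedFDeriv ℝ 3 f (L t) ![h, u, u]
        = fderiv ℝ F (L t) h ![u, u] := by
      rw [iteratedFDeriv_succ_apply_left]
      congr 1
    rw [hval]
    exact hcomp
  set B : ℝ := Hf * (τ ^ ν * ‖h‖ ^ ν) * (‖h‖ * (‖u‖ * ‖u‖)) with hB
  have hbound : ∀ t ∈ Set.Icc (0:ℝ) τ,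
      ‖iteratedFDeriv ℝ 3 f (L t) ![h, u, u] - c‖ ≤ B := by
    intro t ht
    have heq : iteratedFDeriv ℝ 3 f (L t) ![h, u, u] - c
        = (iteratedFDeriv ℝ 3 f (L t) - iteratedFDeriv ℝ 3 f x) ![h, u, u] := by
      simp [hc, ContinuousMultilinearMap.sub_apply]
    rw [heq]
    have h1 := (iteratedFDeriv ℝ 3 f (L t) - iteratedFDeriv ℝ 3 f x).le_opNorm ![h, u, u]
    have h2 := hHolder (L t) x
    have h3 : ‖L t - x‖ = t * ‖h‖ := by
      simp [hLdef, norm_smul, abs_of_nonneg ht.1]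
    have h4 : (t * ‖h‖ : ℝ) ^ ν ≤ τ ^ ν * ‖h‖ ^ ν := by
      rw [Real.mul_rpow ht.1 (norm_nonneg h)]
      have : t ^ ν ≤ τ ^ ν := Real.rpow_le_rpow ht.1 ht.2 hν0
      exact mul_le_mul_of_nonneg_right this (Real.rpow_nonneg (norm_nonneg h) ν)
    have h5 : (∏ i, ‖![h, u, u] i‖) = ‖h‖ * (‖u‖ * ‖u‖) := by
      simp [Fin.prod_univ_three]; ring
    rw [h3] at h2
    calc ‖(iteratedFDeriv ℝ 3 f (L t) - iteratedFDeriv ℝ 3 f x) ![h, u, u]‖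
        ≤ ‖iteratedFDeriv ℝ 3 f (L t) - iteratedFDeriv ℝ 3 f x‖ * (‖h‖ * (‖u‖ * ‖u‖)) := by
          rw [← h5]; exact h1
      _ ≤ (Hf * (τ ^ ν * ‖h‖ ^ ν)) * (‖h‖ * (‖u‖ * ‖u‖)) := by
          apply mul_le_mul_of_nonneg_right _ (by positivity)
          calc ‖iteratedFDeriv ℝ 3 f (L t) - iteratedFDeriv ℝ 3 f x‖
              ≤ Hf * (t * ‖h‖) ^ ν := h2
            _ ≤ Hf * (τ ^ ν * ‖h‖ ^ ν) := by
                exact mul_le_mul_of_nonneg_left h4 hHf.le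
      _ = B := by rw [hB]
  have hψ : ∀ t ∈ Set.Icc (0:ℝ) τ,
      HasDerivWithinAt (fun t => g t - t * c)
        (iteratedFDeriv ℝ 3 f (L t) ![h, u, u] - c) (Set.Icc 0 τ) t := by
    intro t _
    exact ((hg t).sub (hasDerivAt_mul_const c)).hasDerivWithinAt
  have hmvt := (convex_Icc (0:ℝ) τ).norm_image_sub_le_of_norm_hasDerivWithin_le hψ hbound
    (Set.left_mem_Icc.mpr hτ.le) (Set.right_mem_Icc.mpr hτ.le)
  have habs : |g τ - τ * c - g 0| ≤ B * τ := by
    simpa [abs_of_pos hτ, Real.norm_eq_abs] using hmvt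
  have hg0 : g 0 = iteratedFDeriv ℝ 2 f x ![u, u] := by rw [hgdef]; simp [hL0, hFdef]
  have hgτ : 0 ≤ g τ := hessian_nonneg' f hf hconv (L τ) u
  have hup : g τ - τ * c - g 0 ≤ B * τ := (abs_le.mp habs).2
  have hkey : 0 ≤ g 0 + τ * c + B * τ := by linarith
  have hpow : ‖h‖ ^ (1 + ν) = ‖h‖ * ‖h‖ ^ ν := by
    rw [Real.rpow_add' (norm_nonneg h) (by linarith), Real.rpow_one]
  have hBeq : τ ^ ν * Hf * ‖h‖ ^ (1 + ν) * ‖u‖ ^ 2 = B := by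
    rw [hB, hpow]; ring
  rw [hBeq]
  have hdiv : -c ≤ g 0 / τ + B := by
    have h2 : -(τ * c) ≤ g 0 + B * τ := by linarith
    have h3 : (-(τ * c)) / τ ≤ (g 0 + B * τ) / τ := (div_le_div_iff_of_pos_right hτ).mpr h2
    have h4 : (-(τ * c)) / τ = -c := by field_simp
    have h5 : (g 0 + B * τ) / τ = g 0 / τ + B := by field_simp
    rw [h4, h5] at h3
    exact h3
  have h6 : (1 / τ) * g 0 = g 0 / τ := by ring
  rw [← hg0]
  linarith

/-- Lemma 3.2. Bounds on the third derivative of a convex function with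
`ν`-Hölder continuous third derivatives:
`−(1/τ)⟨∇²f(x)u,u⟩ − τ^ν H ‖y−x‖^{1+ν}‖u‖² ≤ D³f(x)[y−x,u,u] ≤ (1/τ)⟨∇²f(x)u,u⟩ + τ^ν H ‖y−x‖^{1+ν}‖u‖²`. -/
theorem statement_1
    {E : Type*} [NormedAddCommGroup E] [InnerProductSpace ℝ E] [FiniteDimensional ℝ E]
    (ν Hf : ℝ) (hν : ν ∈ Set.Icc (0 : ℝ) 1) (hHf : 0 < Hf)
    (f : E → ℝ) (hf : ContDiff ℝ 3 f) (hconv : ConvexOn ℝ Set.univ f)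
    (hHolder : ∀ x y : E,
      ‖iteratedFDeriv ℝ 3 f x - iteratedFDeriv ℝ 3 f y‖ ≤ Hf * ‖x - y‖ ^ ν)
    (x y u : E) (τ : ℝ) (hτ : 0 < τ) :
    -(1 / τ) * iteratedFDeriv ℝ 2 f x ![u, u]
        - τ ^ ν * Hf * ‖y - x‖ ^ (1 + ν) * ‖u‖ ^ 2
      ≤ iteratedFDeriv ℝ 3 f x ![y - x, u, u] ∧
    iteratedFDeriv ℝ 3 f x ![y - x, u, u]
      ≤ (1 / τ) * iteratedFDeriv ℝ 2 f x ![u, u]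
        + τ ^ ν * Hf * ‖y - x‖ ^ (1 + ν) * ‖u‖ ^ 2 := by
  constructor
  · have hk := key' ν Hf hν hHf f hf hconv hHolder x u (y - x) τ hτ
    linarith
  · have hk := key' ν Hf hν hHf f hf hconv hHolder x u (-(y - x)) τ hτ
    have hneg : iteratedFDeriv ℝ 3 f x ![-(y - x), u, u]
        = - iteratedFDeriv ℝ 3 f x ![y - x, u, u] := by
      have e1 : ![-(y - x), u, u] = Function.update ![y - x, u, u] 0 (-(y - x)) := by
        funext i; fin_cases i <;> simp
      have e2 : ![y - x, u, u] = Function.update ![y - x, u, u] 0 (y - x) := by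
        funext i; fin_cases i <;> simp
      have hmn := (iteratedFDeriv ℝ 3 f x).toMultilinearMap.map_update_neg
        ![y - x, u, u] 0 (y - x)
      rw [ContinuousMultilinearMap.coe_coe] at hmn
      rw [e1, hmn, ← e2]
    rw [hneg, norm_neg] at hk
    linarith
end

section
/- Let H ≥ H_{f,3}(ν). Suppose f has a global minimizer x*, that x ∈ F(x₀) := {z ∈ E : f(z) ≤ f(x₀)}, and that sup_{y∈F(x₀)} ‖y − x*‖ ≤ R₀ < +∞ with R₀ ≥ 1. Let L_H(x) = {z ∈ E : Ω_{x,3,H}^{(ν)}(z) ≤ f(x)}. Then every y in the convex hull of L_H(x) satisfies ‖y − x‖ ≤ 2R₀ and ‖∇²ρ_x(y)‖ ≤ ‖∇²f(x)‖ + 12R₀², where ‖·‖ applied to operators denotes the operator norm. -/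
open scoped InnerProductSpace

set_option maxHeartbeats 2000000

lemma iteratedFDeriv_three_apply' {E F : Type*} [NormedAddCommGroup E] [NormedSpace ℝ E]
    [NormedAddCommGroup F] [NormedSpace ℝ F] (f : E → F) (z : E) (m : Fin 3 → E) :
    iteratedFDeriv ℝ 3 f z m = fderiv ℝ (fderiv ℝ (fderiv ℝ f)) z (m 0) (m 1) (m 2) := by
  have h := iteratedFDeriv_succ_apply_right (𝕜 := ℝ) (n := 2) (f := f) (x := z) (m := m)
  rw [iteratedFDeriv_two_apply] at h
  simpa [Fin.init, Fin.last] using h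

lemma taylor_upper_bound {E : Type*} [NormedAddCommGroup E] [NormedSpace ℝ E]
    (ν Hf : ℝ) (hν0 : 0 ≤ ν) (hHf : 0 ≤ Hf)
    (f : E → ℝ) (hf : ContDiff ℝ 3 f)
    (hHolder : ∀ a b : E, ‖iteratedFDeriv ℝ 3 f a - iteratedFDeriv ℝ 3 f b‖ ≤ Hf * ‖a - b‖ ^ ν)
    (x z : E) :
    f z ≤ f x + fderiv ℝ f x (z - x)
      + (1/2) * iteratedFDeriv ℝ 2 f x ![z-x, z-x]
      + (1/6) * iteratedFDeriv ℝ 3 f x ![z-x,z-x,z-x]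
      + (Hf/6) * ‖z - x‖ ^ ((3:ℝ)+ν) := by
  set u := z - x with hu
  set γ : ℝ → E := fun t => x + t • u with hγdef
  set φ : ℝ → ℝ := fun t => f (γ t) with hφdef
  set f1 := fderiv ℝ f with hf1
  set f2 := fderiv ℝ f1 with hf2
  set f3 := fderiv ℝ f2 with hf3
  set φ1 : ℝ → ℝ := fun t => f1 (γ t) u with hφ1def
  set φ2 : ℝ → ℝ := fun t => f2 (γ t) u u with hφ2def
  set φ3 : ℝ → ℝ := fun t => f3 (γ t) u u u with hφ3def
  have hdf : ContDiff ℝ 2 f1 := hf.fderiv_right (by norm_num)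
  have hdf2 : ContDiff ℝ 1 f2 := hdf.fderiv_right (by norm_num)
  have hγ : ∀ t : ℝ, HasDerivAt γ u t := by
    intro t
    have h := ((hasDerivAt_id t).smul_const u).const_add x
    rw [one_smul] at h
    exact h
  have h1 : ∀ t, HasDerivAt φ (φ1 t) t := fun t =>
    ((hf.differentiable (by norm_num) (γ t)).hasFDerivAt).comp_hasDerivAt t (hγ t)
  have h2 : ∀ t, HasDerivAt φ1 (φ2 t) t := by
    intro t
    have hA := ((hdf.differentiable (by norm_num) (γ t)).hasFDerivAt).comp_hasDerivAt t (hγ t)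
    simpa using hA.clm_apply (hasDerivAt_const t u)
  have h3 : ∀ t, HasDerivAt φ2 (φ3 t) t := by
    intro t
    have hA := ((hdf2.differentiable (by norm_num) (γ t)).hasFDerivAt).comp_hasDerivAt t (hγ t)
    have hB := hA.clm_apply (hasDerivAt_const t u)
    have hC := hB.clm_apply (hasDerivAt_const t u)
    simpa using hC
  have hφ : ContDiff ℝ 3 φ :=
    hf.comp (contDiff_const.add (contDiff_id.smul contDiff_const))
  have hid1 : iteratedDeriv 1 φ = φ1 := by
    rw [iteratedDeriv_one]; exact funext fun t => (h1 t).deriv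
  have hid2 : iteratedDeriv 2 φ = φ2 := by
    rw [show (2:ℕ) = 1 + 1 from rfl, iteratedDeriv_succ, hid1]
    exact funext fun t => (h2 t).deriv
  have hid3 : iteratedDeriv 3 φ = φ3 := by
    rw [show (3:ℕ) = 2 + 1 from rfl, iteratedDeriv_succ, hid2]
    exact funext fun t => (h3 t).deriv
  have huniq : UniqueDiffOn ℝ (Set.Icc (0:ℝ) 1) := uniqueDiffOn_Icc (by norm_num)
  have hwithin : ∀ m : ℕ, m ≤ 3 → ∀ t ∈ Set.Icc (0:ℝ) 1,
      iteratedDerivWithin m φ (Set.Icc 0 1) t = iteratedDeriv m φ t := by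
    intro m hm t ht
    rw [iteratedDerivWithin_eq_iteratedFDerivWithin, iteratedDeriv_eq_iteratedFDeriv]
    congr 1
    exact (((contDiff_iff_ftaylorSeries.mp hφ).hasFTaylorSeriesUpToOn _).eq_iteratedFDerivWithin_of_uniqueDiffOn
      (by exact_mod_cast hm) huniq ht).symm
  have hcont : ContDiffOn ℝ 2 φ (Set.Icc 0 1) := (hφ.of_le (by norm_num)).contDiffOn
  have hdiff : DifferentiableOn ℝ (iteratedDerivWithin 2 φ (Set.Icc 0 1)) (Set.Ioo 0 1) := by
    have hd : DifferentiableOn ℝ φ2 (Set.Ioo 0 1) :=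
      fun t _ => (h3 t).differentiableAt.differentiableWithinAt
    exact hd.congr fun t ht => by
      rw [hwithin 2 (by norm_num) t (Set.mem_Icc_of_Ioo ht), hid2]
  obtain ⟨ξ, hξ, hTay⟩ := taylor_mean_remainder_lagrange (n := 2)
    (x₀ := 0) (x := 1) (by norm_num : (0:ℝ) ≠ 1) (by rw [Set.uIcc_of_le zero_le_one]; exact hcont)
    (by rw [Set.uIcc_of_le zero_le_one, Set.uIoo_of_le zero_le_one]; exact hdiff)
  rw [Set.uIcc_of_le zero_le_one] at hTay
  rw [Set.uIoo_of_le zero_le_one] at hξ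
  have hmem0 : (0:ℝ) ∈ Set.Icc (0:ℝ) 1 := by norm_num
  have hT : taylorWithinEval φ 2 (Set.Icc (0:ℝ) 1) 0 1 = φ 0 + φ1 0 + φ2 0 / 2 := by
    rw [taylor_within_apply, Finset.sum_range_succ, Finset.sum_range_succ,
      Finset.sum_range_one,
      hwithin 0 (by norm_num) 0 hmem0, hwithin 1 (by norm_num) 0 hmem0,
      hwithin 2 (by norm_num) 0 hmem0, hid1, hid2]
    simp [iteratedDeriv_zero]
    ring
  have hξ3 : iteratedDerivWithin 3 φ (Set.Icc 0 1) ξ = φ3 ξ := by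
    rw [hwithin 3 le_rfl ξ (Set.mem_Icc_of_Ioo hξ), hid3]
  rw [hξ3, hT] at hTay
  norm_num [Nat.factorial] at hTay
  -- hTay : φ 1 - (φ 0 + φ1 0 + φ2 0 / 2) = φ3 ξ / 6
  have e1 : φ3 ξ - φ3 0 =
      (iteratedFDeriv ℝ 3 f (γ ξ) - iteratedFDeriv ℝ 3 f (γ 0)) ![u,u,u] := by
    rw [ContinuousMultilinearMap.sub_apply, iteratedFDeriv_three_apply',
      iteratedFDeriv_three_apply', ← hf1, ← hf2, ← hf3]
    simp [hφ3def]
  have e2 : ‖(iteratedFDeriv ℝ 3 f (γ ξ) - iteratedFDeriv ℝ 3 f (γ 0)) ![u,u,u]‖ ≤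
      ‖iteratedFDeriv ℝ 3 f (γ ξ) - iteratedFDeriv ℝ 3 f (γ 0)‖ * (‖u‖ * ‖u‖ * ‖u‖) := by
    have h := (iteratedFDeriv ℝ 3 f (γ ξ) - iteratedFDeriv ℝ 3 f (γ 0)).le_opNorm ![u,u,u]
    simpa [Fin.prod_univ_three] using h
  have hγξ : ‖γ ξ - γ 0‖ = ξ * ‖u‖ := by
    have : γ ξ - γ 0 = ξ • u := by simp [hγdef]
    rw [this, norm_smul, Real.norm_eq_abs, abs_of_nonneg hξ.1.le]
  have e3 : ‖iteratedFDeriv ℝ 3 f (γ ξ) - iteratedFDeriv ℝ 3 f (γ 0)‖ ≤ Hf * ‖u‖ ^ ν := by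
    have h := hHolder (γ ξ) (γ 0)
    
    calc ‖iteratedFDeriv ℝ 3 f (γ ξ) - iteratedFDeriv ℝ 3 f (γ 0)‖
        ≤ Hf * ‖γ ξ - γ 0‖ ^ ν := h
      _ = Hf * (ξ ^ ν * ‖u‖ ^ ν) := by
          rw [hγξ, Real.mul_rpow hξ.1.le (norm_nonneg u)]
      _ ≤ Hf * (1 * ‖u‖ ^ ν) := by
          have h1 : ξ ^ ν ≤ 1 := Real.rpow_le_one hξ.1.le hξ.2.le hν0
          have h2 : (0:ℝ) ≤ ‖u‖ ^ ν := Real.rpow_nonneg (norm_nonneg u) ν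
          gcongr
      _ = Hf * ‖u‖ ^ ν := by ring
  have hx3 : ‖u‖ ^ ν * (‖u‖ * ‖u‖ * ‖u‖) = ‖u‖ ^ ((3:ℝ)+ν) := by
    rw [show (3:ℝ)+ν = ν + 3 by ring,
      Real.rpow_add' (norm_nonneg u) (by positivity),
      show (3:ℝ) = ((3:ℕ):ℝ) by norm_num, Real.rpow_natCast]
    ring
  have key : φ3 ξ ≤ φ3 0 + Hf * ‖u‖ ^ ((3:ℝ)+ν) := by
    have habs : φ3 ξ - φ3 0 ≤ Hf * ‖u‖ ^ ((3:ℝ)+ν) := by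
      calc φ3 ξ - φ3 0 ≤ ‖φ3 ξ - φ3 0‖ := le_abs_self _
        _ = ‖(iteratedFDeriv ℝ 3 f (γ ξ) - iteratedFDeriv ℝ 3 f (γ 0)) ![u,u,u]‖ := by rw [e1]
        _ ≤ ‖iteratedFDeriv ℝ 3 f (γ ξ) - iteratedFDeriv ℝ 3 f (γ 0)‖ * (‖u‖ * ‖u‖ * ‖u‖) := e2
        _ ≤ (Hf * ‖u‖ ^ ν) * (‖u‖ * ‖u‖ * ‖u‖) := by
            have : (0:ℝ) ≤ ‖u‖ * ‖u‖ * ‖u‖ := by positivity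
            exact mul_le_mul_of_nonneg_right e3 this
        _ = Hf * ‖u‖ ^ ((3:ℝ)+ν) := by rw [mul_assoc, hx3]
    linarith
  have hγ0 : γ 0 = x := by simp [hγdef]
  have hγ1 : γ 1 = z := by simp [hγdef, hu]
  have hφ0 : φ 0 = f x := by rw [hφdef]; simp [hγ0]
  have hphiv1 : φ 1 = f z := by rw [hφdef]; simp [hγ1]
  have hφ1' : φ1 0 = fderiv ℝ f x u := by rw [hφ1def]; simp [hγ0, hf1]
  have hφ2' : φ2 0 = iteratedFDeriv ℝ 2 f x ![u,u] := by
    rw [hφ2def, iteratedFDeriv_two_apply, ← hf1, ← hf2]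
    simp [hγ0]
  have hφ3' : φ3 0 = iteratedFDeriv ℝ 3 f x ![u,u,u] := by
    rw [hφ3def, iteratedFDeriv_three_apply', ← hf1, ← hf2, ← hf3]
    simp [hγ0]
  rw [← hphiv1, ← hφ0, ← hφ1', ← hφ2', ← hφ3']
  linarith


lemma rho_hessian_bound {E : Type*} [NormedAddCommGroup E] [InnerProductSpace ℝ E]
    (ν : ℝ) (hν0 : 0 ≤ ν)
    (B : ContinuousMultilinearMap ℝ (fun _ : Fin 2 => E) ℝ) (x : E)
    (ρ : E → ℝ)
    (hρ : ρ = fun y => (1/2) * B ![y-x, y-x] + (1/(3+ν)) * ‖y-x‖ ^ ((3:ℝ)+ν))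
    (y : E) :
    ‖iteratedFDeriv ℝ 2 ρ y‖ ≤ ‖B‖ + (2+ν) * ‖y - x‖ ^ ((1:ℝ)+ν) := by
  have h3ν : (0:ℝ) < 3 + ν := by linarith
  have hupd0 : ∀ h k a : E, Function.update ![h,k] 0 a = ![a,k] := by
    intro h k a; ext i; fin_cases i <;> simp [Function.update]
  have hupd1 : ∀ h k a : E, Function.update ![h,k] 1 a = ![h,a] := by
    intro h k a; ext i; fin_cases i <;> simp [Function.update]
  set b : E →L[ℝ] E →L[ℝ] ℝ := LinearMap.mkContinuous₂
    (LinearMap.mk₂ ℝ (fun h k => B ![h,k])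
      (fun m₁ m₂ n => by simpa [hupd0] using B.map_update_add ![m₁,n] 0 m₁ m₂)
      (fun c m n => by simpa [hupd0] using B.map_update_smul ![m,n] 0 c m)
      (fun m n₁ n₂ => by simpa [hupd1] using B.map_update_add ![m,n₁] 1 n₁ n₂)
      (fun c m n => by simpa [hupd1] using B.map_update_smul ![m,n] 1 c n))
    ‖B‖ (fun h k => by
      have := B.le_opNorm ![h,k]
      simpa [Fin.prod_univ_two, mul_assoc] using this) with hbdef
  have hb : ∀ h k : E, b h k = B ![h,k] := fun _ _ => rfl
  have hbabs : ∀ h k : E, |b h k| ≤ ‖B‖ * (‖h‖ * ‖k‖) := by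
    intro h k
    have := B.le_opNorm ![h,k]
    simpa [hb, Fin.prod_univ_two, Real.norm_eq_abs, mul_assoc] using this
  set M : E →L[ℝ] E →L[ℝ] ℝ := ((1:ℝ)/2) • (b + b.flip) with hMdef
  have hMabs : ∀ h k : E, |M h k| ≤ ‖B‖ * (‖h‖ * ‖k‖) := by
    intro h k
    have e : M h k = (1/2) * (b h k + b k h) := by
      simp only [hMdef, ContinuousLinearMap.smul_apply, ContinuousLinearMap.add_apply,
        ContinuousLinearMap.flip_apply, smul_eq_mul]
    rw [e]
    have h1 := hbabs h k
    have h2 := hbabs k h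
    have h3 := abs_add_le (b h k) (b k h)
    rw [abs_mul, abs_of_nonneg (by norm_num : (0:ℝ) ≤ 1/2)]
    linarith
  set J : E →L[ℝ] E →L[ℝ] ℝ := LinearMap.mkContinuous₂
    (LinearMap.mk₂ ℝ (fun w v => (⟪w,v⟫_ℝ))
      (fun m₁ m₂ n => inner_add_left m₁ m₂ n)
      (fun c m n => real_inner_smul_left m n c)
      (fun m n₁ n₂ => inner_add_right m n₁ n₂)
      (fun c m n => real_inner_smul_right m n c))
    1 (fun w v => by simpa using abs_real_inner_le_norm w v) with hJdef
  have hJ : ∀ w v : E, J w v = ⟪w,v⟫_ℝ := fun _ _ => rfl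
  have hJnorm : ∀ w : E, ‖J w‖ ≤ ‖w‖ := fun w =>
    ContinuousLinearMap.opNorm_le_bound _ (norm_nonneg w) (fun v => by
      rw [hJ]
      simpa using abs_real_inner_le_norm w v)
  set c : E → ℝ := fun w => (⟪w,w⟫_ℝ) ^ (((1:ℝ)+ν)/2) with hcdef
  have hcval : ∀ w : E, c w = ‖w‖ ^ ((1:ℝ)+ν) := by
    intro w
    rw [hcdef]
    simp only []
    rw [real_inner_self_eq_norm_sq, ← Real.rpow_natCast ‖w‖ 2,
      ← Real.rpow_mul (norm_nonneg w)]
    congr 1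
    push_cast
    ring
  set ρ' : E → ℝ := fun v => (1/2:ℝ) * (b (v-x) (v-x))
      + (1/(3+ν)) * ((⟪v-x,v-x⟫_ℝ) ^ (((3:ℝ)+ν)/2)) with hρ'def
  have hρρ' : ρ = ρ' := by
    rw [hρ, hρ'def]
    funext v
    congr 1
    congr 1
    rw [real_inner_self_eq_norm_sq, ← Real.rpow_natCast ‖v-x‖ 2,
      ← Real.rpow_mul (norm_nonneg (v-x))]
    congr 1
    push_cast
    ring
  set Dρ : E → E →L[ℝ] ℝ := fun v => M (v-x) + c (v-x) • J (v-x) with hDdef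
  have hsub : ∀ y : E, HasFDerivAt (fun v : E => v - x) (ContinuousLinearMap.id ℝ E) y :=
    fun y => (hasFDerivAt_id y).sub_const x
  have hS : ∀ y : E, HasFDerivAt (fun v => (⟪v-x, v-x⟫_ℝ)) ((2:ℝ) • J (y-x)) y := by
    intro y
    have h := (hsub y).inner ℝ (hsub y)
    refine h.congr_fderiv ?_
    ext v
    simp only [ContinuousLinearMap.comp_apply, ContinuousLinearMap.prod_apply,
      ContinuousLinearMap.coe_id', id_eq, fderivInnerCLM_apply,
      ContinuousLinearMap.smul_apply, smul_eq_mul, hJ]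
    rw [real_inner_comm v (y-x)]
    ring
  have hq1 : ∀ y : E, HasFDerivAt (fun v => (1/2:ℝ) * (b (v-x) (v-x))) (M (y-x)) y := by
    intro y
    have hbb := b.isBoundedBilinearMap
    have hp : HasFDerivAt (fun v : E => (v - x, v - x))
        ((ContinuousLinearMap.id ℝ E).prod (ContinuousLinearMap.id ℝ E)) y :=
      HasFDerivAt.prodMk (hsub y) (hsub y)
    have h := ((hbb.hasFDerivAt (y-x, y-x)).comp y hp).const_mul (1/2:ℝ)
    refine h.congr_fderiv ?_
    ext v
    simp only [ContinuousLinearMap.smul_apply, ContinuousLinearMap.comp_apply,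
      ContinuousLinearMap.prod_apply, ContinuousLinearMap.coe_id', id_eq,
      hbb.deriv_apply, hMdef, ContinuousLinearMap.add_apply,
      ContinuousLinearMap.flip_apply, smul_eq_mul]
  have hr1 : ∀ y : E, HasFDerivAt
      (fun v => (1/(3+ν)) * ((⟪v-x,v-x⟫_ℝ) ^ (((3:ℝ)+ν)/2))) (c (y-x) • J (y-x)) y := by
    intro y
    have hg : HasDerivAt (fun t : ℝ => t ^ (((3:ℝ)+ν)/2))
        ((((3:ℝ)+ν)/2) * (⟪y-x,y-x⟫_ℝ) ^ (((3:ℝ)+ν)/2 - 1)) (⟪y-x,y-x⟫_ℝ) :=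
      Real.hasDerivAt_rpow_const (Or.inr (by linarith))
    have h := (hg.comp_hasFDerivAt y (hS y)).const_mul (1/(3+ν):ℝ)
    refine h.congr_fderiv ?_
    ext v
    rw [show (((3:ℝ)+ν)/2 - 1) = (((1:ℝ)+ν)/2) by ring]
    simp only [ContinuousLinearMap.smul_apply, smul_eq_mul, hJ, hcdef]
    field_simp
  have hA : ∀ v : E, HasFDerivAt ρ' (Dρ v) v := fun v => (hq1 v).add (hr1 v)
  have hfd : fderiv ℝ ρ' = Dρ := funext fun v => (hA v).fderiv
  have hM' : ∀ y : E, HasFDerivAt (fun v : E => M (v-x)) M y := by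
    intro y
    have h := M.hasFDerivAt.comp y (hsub y)
    exact h.congr_fderiv (M.comp_id)
  rw [hρρ']
  by_cases hyx : y = x
  · have hr2 : HasFDerivAt (fun v : E => c (v-x) • J (v-x)) (0 : E →L[ℝ] E →L[ℝ] ℝ) y := by
      rw [hyx]
      have hc0 : c (x - x) = 0 := by
        rw [hcval]
        simp only [sub_self, norm_zero]
        exact Real.zero_rpow (by positivity)
      have hlo : (fun v : E => (c (v-x) • J (v-x)) - (c (x-x) • J (x-x))
          - (0 : E →L[ℝ] E →L[ℝ] ℝ) (v - x)) =o[nhds x] fun v => v - x := by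
        have he : (fun v : E => (c (v-x) • J (v-x)) - (c (x-x) • J (x-x))
            - (0 : E →L[ℝ] E →L[ℝ] ℝ) (v - x)) = fun v : E => c (v-x) • J (v-x) := by
          funext v
          simp [hc0]
        rw [he, Asymptotics.isLittleO_iff]
        intro ε hε
        filter_upwards [Metric.ball_mem_nhds x (lt_min one_pos hε)] with v hv
        rw [Metric.mem_ball, dist_eq_norm] at hv
        show ‖c (v-x) • J (v-x)‖ ≤ ε * ‖v - x‖
        have h1 : ‖c (v-x) • J (v-x)‖ ≤ ‖v-x‖^((1:ℝ)+ν) * ‖v-x‖ := by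
          have hn : ‖c (v-x) • J (v-x)‖ = ‖c (v-x)‖ * ‖J (v-x)‖ := by exact norm_smul (c (v-x)) (J (v-x))
          rw [hn, Real.norm_eq_abs, hcval,
            abs_of_nonneg (Real.rpow_nonneg (norm_nonneg _) _)]
          exact mul_le_mul_of_nonneg_left (hJnorm _) (Real.rpow_nonneg (norm_nonneg _) _)
        have h2 : ‖v-x‖^((1:ℝ)+ν) ≤ ε := by
          rcases eq_or_lt_of_le (norm_nonneg (v-x)) with h0 | h0
          · rw [← h0, Real.zero_rpow (by positivity)]
            exact hε.le
          · have hle1 : ‖v-x‖ ≤ 1 := le_of_lt (lt_of_lt_of_le hv (min_le_left _ _))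
            calc ‖v-x‖^((1:ℝ)+ν) ≤ ‖v-x‖^(1:ℝ) :=
                  Real.rpow_le_rpow_of_exponent_ge h0 hle1 (by linarith)
              _ = ‖v-x‖ := Real.rpow_one _
              _ ≤ ε := le_of_lt (lt_of_lt_of_le hv (min_le_right _ _))
        calc ‖c (v-x) • J (v-x)‖ ≤ ‖v-x‖^((1:ℝ)+ν) * ‖v-x‖ := h1
          _ ≤ ε * ‖v-x‖ := mul_le_mul_of_nonneg_right h2 (norm_nonneg _)
      exact HasFDerivAt.of_isLittleO hlo
    have hB2 : HasFDerivAt Dρ M y := ((hM' y).add hr2).congr_fderiv (add_zero M)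
    have hC0 : (0:ℝ) ≤ (2+ν) * ‖y - x‖ ^ ((1:ℝ)+ν) :=
      mul_nonneg (by linarith) (Real.rpow_nonneg (norm_nonneg _) _)
    refine ContinuousMultilinearMap.opNorm_le_bound
      (le_trans (norm_nonneg B) (by linarith)) ?_
    intro m
    have e : iteratedFDeriv ℝ 2 ρ' y m = M (m 0) (m 1) := by
      rw [iteratedFDeriv_two_apply, hfd, hB2.fderiv]
    rw [e, Fin.prod_univ_two]
    have hb1 : ‖M (m 0) (m 1)‖ ≤ ‖B‖ * (‖m 0‖ * ‖m 1‖) := by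
      rw [Real.norm_eq_abs]; exact hMabs _ _
    calc ‖M (m 0) (m 1)‖ ≤ ‖B‖ * (‖m 0‖ * ‖m 1‖) := hb1
      _ ≤ (‖B‖ + (2+ν) * ‖y - x‖ ^ ((1:ℝ)+ν)) * (‖m 0‖ * ‖m 1‖) :=
          mul_le_mul_of_nonneg_right (by linarith)
            (mul_nonneg (norm_nonneg _) (norm_nonneg _))
  · have hw : y - x ≠ 0 := sub_ne_zero.mpr hyx
    have hwpos : 0 < ‖y - x‖ := norm_pos_iff.mpr hw
    have hsw : (⟪y-x, y-x⟫_ℝ) ≠ 0 := by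
      rw [real_inner_self_eq_norm_sq]; positivity
    set C : E →L[ℝ] ℝ := ((((1:ℝ)+ν)/2) * (⟪y-x,y-x⟫_ℝ) ^ (((1:ℝ)+ν)/2 - 1)) • ((2:ℝ) • J (y-x))
      with hCdef
    have hcD : HasFDerivAt (fun v : E => c (v-x)) C y := by
      have hg : HasDerivAt (fun t : ℝ => t ^ (((1:ℝ)+ν)/2))
          ((((1:ℝ)+ν)/2) * (⟪y-x,y-x⟫_ℝ) ^ (((1:ℝ)+ν)/2 - 1)) (⟪y-x,y-x⟫_ℝ) :=
        Real.hasDerivAt_rpow_const (Or.inl hsw)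
      exact hg.comp_hasFDerivAt y (hS y)
    have hJw : HasFDerivAt (fun v : E => J (v-x)) J y := by
      have h := J.hasFDerivAt.comp y (hsub y)
      exact h.congr_fderiv (J.comp_id)
    have hr2 := hcD.smul hJw
    have hB2 : HasFDerivAt Dρ (M + (c (y-x) • J + C.smulRight (J (y-x)))) y := (hM' y).add hr2
    have hsw1 : (⟪y-x,y-x⟫_ℝ) ^ (((1:ℝ)+ν)/2 - 1) = ‖y-x‖ ^ (ν - 1) := by
      rw [real_inner_self_eq_norm_sq, ← Real.rpow_natCast ‖y-x‖ 2,
        ← Real.rpow_mul (norm_nonneg _)]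
      congr 1
      push_cast
      ring
    have hpow : ‖y-x‖^(ν-1) * (‖y-x‖ * ‖y-x‖) = ‖y-x‖ ^ ((1:ℝ)+ν) := by
      rw [show (1:ℝ)+ν = (ν-1) + 2 by ring, Real.rpow_add hwpos,
        show ((2:ℝ)) = ((2:ℕ):ℝ) by norm_num, Real.rpow_natCast]
      ring
    have hpt : ∀ h k : E, ‖(M + (c (y-x) • J + C.smulRight (J (y-x)))) h k‖
        ≤ (‖B‖ + (2+ν) * ‖y-x‖^((1:ℝ)+ν)) * (‖h‖ * ‖k‖) := by
      intro h k
      have expand : (M + (c (y-x) • J + C.smulRight (J (y-x)))) h k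
          = M h k + (c (y-x) * ⟪h,k⟫_ℝ + (C h) * ⟪y-x,k⟫_ℝ) := by
        simp only [ContinuousLinearMap.add_apply, ContinuousLinearMap.smul_apply,
          ContinuousLinearMap.smulRight_apply, smul_eq_mul, hJ]
      rw [Real.norm_eq_abs, expand]
      have habs1 : |M h k| ≤ ‖B‖ * (‖h‖*‖k‖) := hMabs h k
      have habs2 : |c (y-x) * ⟪h,k⟫_ℝ| ≤ ‖y-x‖^((1:ℝ)+ν) * (‖h‖*‖k‖) := by
        rw [abs_mul, hcval, abs_of_nonneg (Real.rpow_nonneg (norm_nonneg _) _)]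
        exact mul_le_mul_of_nonneg_left (abs_real_inner_le_norm h k)
          (Real.rpow_nonneg (norm_nonneg _) _)
      have habs3 : |C h * ⟪y-x,k⟫_ℝ| ≤ (1+ν) * ‖y-x‖^((1:ℝ)+ν) * (‖h‖*‖k‖) := by
        rw [abs_mul]
        have hCh : |C h| ≤ (1+ν) * (‖y-x‖^(ν-1) * (‖y-x‖ * ‖h‖)) := by
          have e : C h = (((1:ℝ)+ν)/2 * (⟪y-x,y-x⟫_ℝ) ^ (((1:ℝ)+ν)/2 - 1)) * (2 * ⟪y-x,h⟫_ℝ) := by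
            simp only [hCdef, ContinuousLinearMap.smul_apply, smul_eq_mul, hJ]
          rw [e, hsw1, abs_mul, abs_mul, abs_mul]
          have h1 : |((1:ℝ)+ν)/2| = (1+ν)/2 := abs_of_nonneg (by linarith)
          have h2 : |‖y-x‖^(ν-1)| = ‖y-x‖^(ν-1) :=
            abs_of_nonneg (Real.rpow_nonneg (norm_nonneg _) _)
          have h3 : |⟪y-x,h⟫_ℝ| ≤ ‖y-x‖ * ‖h‖ := abs_real_inner_le_norm _ _
          rw [h1, h2, abs_of_nonneg (by norm_num : (0:ℝ) ≤ (2:ℝ))]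
          have hrn : (0:ℝ) ≤ ‖y-x‖^(ν-1) := Real.rpow_nonneg (norm_nonneg _) _
          calc ((1:ℝ)+ν)/2 * ‖y-x‖^(ν-1) * (2 * |⟪y-x,h⟫_ℝ|)
              = ((1+ν) * ‖y-x‖^(ν-1)) * |⟪y-x,h⟫_ℝ| := by ring
            _ ≤ ((1+ν) * ‖y-x‖^(ν-1)) * (‖y-x‖ * ‖h‖) :=
                mul_le_mul_of_nonneg_left h3 (mul_nonneg (by linarith) hrn)
            _ = (1+ν) * (‖y-x‖^(ν-1) * (‖y-x‖ * ‖h‖)) := by ring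
        have h4 : |⟪y-x,k⟫_ℝ| ≤ ‖y-x‖ * ‖k‖ := abs_real_inner_le_norm _ _
        calc |C h| * |⟪y-x,k⟫_ℝ| ≤ ((1+ν) * (‖y-x‖^(ν-1) * (‖y-x‖ * ‖h‖))) * (‖y-x‖ * ‖k‖) := by
              apply mul_le_mul hCh h4 (abs_nonneg _)
              positivity
          _ = (1+ν) * (‖y-x‖^(ν-1) * (‖y-x‖ * ‖y-x‖)) * (‖h‖ * ‖k‖) := by ring
          _ = (1+ν) * ‖y-x‖^((1:ℝ)+ν) * (‖h‖*‖k‖) := by rw [hpow]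
      have hsum := abs_add_le (M h k) (c (y-x) * ⟪h,k⟫_ℝ + (C h) * ⟪y-x,k⟫_ℝ)
      have hsum2 := abs_add_le (c (y-x) * ⟪h,k⟫_ℝ) ((C h) * ⟪y-x,k⟫_ℝ)
      have hfin : ‖B‖ * (‖h‖*‖k‖) + ‖y-x‖^((1:ℝ)+ν) * (‖h‖*‖k‖)
          + (1+ν) * ‖y-x‖^((1:ℝ)+ν) * (‖h‖*‖k‖)
          = (‖B‖ + (2+ν) * ‖y-x‖^((1:ℝ)+ν)) * (‖h‖ * ‖k‖) := by ring
      linarith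
    have hC0 : (0:ℝ) ≤ (2+ν) * ‖y - x‖ ^ ((1:ℝ)+ν) :=
      mul_nonneg (by linarith) (Real.rpow_nonneg (norm_nonneg _) _)
    refine ContinuousMultilinearMap.opNorm_le_bound
      (le_trans (norm_nonneg B) (by linarith)) ?_
    intro m
    have e : iteratedFDeriv ℝ 2 ρ' y m
        = (M + (c (y-x) • J + C.smulRight (J (y-x)))) (m 0) (m 1) := by
      rw [iteratedFDeriv_two_apply, hfd, hB2.fderiv]
    rw [e, Fin.prod_univ_two]
    exact hpt (m 0) (m 1)
/-- Lemma 3.5. If `H ≥ H_{f,3}(ν)`, `f` has a global minimizer `x*`,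
`x` lies in the sublevel set `F(x₀)` and `F(x₀)` is contained in the ball of radius `R₀ ≥ 1`
around `x*`, then every `y` in the convex hull of `L_H(x) = {z : Ω_{x,3,H}^{(ν)}(z) ≤ f(x)}`
satisfies `‖y − x‖ ≤ 2R₀` and `‖∇²ρ_x(y)‖ ≤ ‖∇²f(x)‖ + 12R₀²`. -/
theorem statement_4
    {E : Type*} [NormedAddCommGroup E] [InnerProductSpace ℝ E] [FiniteDimensional ℝ E]
    (ν Hf : ℝ) (hν : ν ∈ Set.Icc (0 : ℝ) 1) (hHf : 0 < Hf)
    (f : E → ℝ) (hf : ContDiff ℝ 3 f) (hconv : ConvexOn ℝ Set.univ f)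
    (hHolder : ∀ x y : E,
      ‖iteratedFDeriv ℝ 3 f x - iteratedFDeriv ℝ 3 f y‖ ≤ Hf * ‖x - y‖ ^ ν)
    (H : ℝ) (hH : Hf ≤ H)
    (x x0 xstar : E) (R0 : ℝ) (hR0 : 1 ≤ R0)
    (hmin : ∀ z : E, f xstar ≤ f z)
    (hxF : f x ≤ f x0)
    (hball : ∀ z : E, f z ≤ f x0 → ‖z - xstar‖ ≤ R0)
    (Ω ρ : E → ℝ)
    (hΩ : Ω = fun y => f x + ⟪gradient f x, y - x⟫_ℝ
        + (1 / 2) * iteratedFDeriv ℝ 2 f x ![y - x, y - x]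
        + (1 / 6) * iteratedFDeriv ℝ 3 f x ![y - x, y - x, y - x]
        + (H / 6) * ‖y - x‖ ^ ((3 : ℝ) + ν))
    (hρ : ρ = fun y => (1 / 2) * iteratedFDeriv ℝ 2 f x ![y - x, y - x]
        + (1 / (3 + ν)) * ‖y - x‖ ^ ((3 : ℝ) + ν)) :
    ∀ y ∈ convexHull ℝ {z : E | Ω z ≤ f x},
      ‖y - x‖ ≤ 2 * R0 ∧
      ‖iteratedFDeriv ℝ 2 ρ y‖ ≤ ‖iteratedFDeriv ℝ 2 f x‖ + 12 * R0 ^ 2 := by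
  obtain ⟨hν0, hν1⟩ := hν
  have hgrad : ∀ u : E, ⟪gradient f x, u⟫_ℝ = fderiv ℝ f x u := fun u => by
    exact InnerProductSpace.toDual_symm_apply
  have hsubset : {z : E | Ω z ≤ f x} ⊆ Metric.closedBall x (2*R0) := by
    intro z hz
    have hz' : Ω z ≤ f x := hz
    have htb := taylor_upper_bound ν Hf hν0 hHf.le f hf hHolder x z
    have hfz : f z ≤ Ω z := by
      rw [hΩ]
      have hgz := hgrad (z - x)
      have hmono : (Hf/6) * ‖z-x‖^((3:ℝ)+ν) ≤ (H/6) * ‖z-x‖^((3:ℝ)+ν) := by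
        apply mul_le_mul_of_nonneg_right _ (Real.rpow_nonneg (norm_nonneg _) _)
        linarith
      show f z ≤ f x + ⟪gradient f x, z - x⟫_ℝ
        + (1 / 2) * iteratedFDeriv ℝ 2 f x ![z - x, z - x]
        + (1 / 6) * iteratedFDeriv ℝ 3 f x ![z - x, z - x, z - x]
        + (H / 6) * ‖z - x‖ ^ ((3 : ℝ) + ν)
      rw [hgz]
      linarith
    have hzx0 : f z ≤ f x0 := le_trans (le_trans hfz hz') hxF
    have h1 := hball z hzx0
    have h2 := hball x hxF
    rw [Metric.mem_closedBall, dist_eq_norm]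
    calc ‖z - x‖ = ‖(z - xstar) - (x - xstar)‖ := by rw [sub_sub_sub_cancel_right]
      _ ≤ ‖z - xstar‖ + ‖x - xstar‖ := norm_sub_le _ _
      _ ≤ R0 + R0 := add_le_add h1 h2
      _ = 2*R0 := by ring
  have hhull : convexHull ℝ {z : E | Ω z ≤ f x} ⊆ Metric.closedBall x (2*R0) :=
    convexHull_min hsubset (convex_closedBall x (2*R0))
  intro y hy
  have hyball : ‖y - x‖ ≤ 2*R0 := by
    have := hhull hy
    rwa [Metric.mem_closedBall, dist_eq_norm] at this
  refine ⟨hyball, ?_⟩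
  have hbound := rho_hessian_bound ν hν0 (iteratedFDeriv ℝ 2 f x) x ρ hρ y
  have h2R : (1:ℝ) ≤ 2*R0 := by linarith
  have e1 : ‖y-x‖^((1:ℝ)+ν) ≤ (2*R0)^((1:ℝ)+ν) :=
    Real.rpow_le_rpow (norm_nonneg _) hyball (by linarith)
  have e2 : (2*R0)^((1:ℝ)+ν) ≤ (2*R0)^(2:ℝ) :=
    Real.rpow_le_rpow_of_exponent_le h2R (by linarith)
  have e3 : (2*R0)^(2:ℝ) = 4*R0^2 := by
    rw [show (2:ℝ) = ((2:ℕ):ℝ) by norm_num, Real.rpow_natCast]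
    ring
  have e4 : ‖y-x‖^((1:ℝ)+ν) ≤ 4*R0^2 := by
    calc ‖y-x‖^((1:ℝ)+ν) ≤ (2*R0)^((1:ℝ)+ν) := e1
      _ ≤ (2*R0)^(2:ℝ) := e2
      _ = 4*R0^2 := e3
  have e5 : (2+ν) * ‖y-x‖^((1:ℝ)+ν) ≤ 3 * (4*R0^2) := by
    have h23 : (2+ν) ≤ 3 := by linarith
    have hnn : (0:ℝ) ≤ ‖y-x‖^((1:ℝ)+ν) := Real.rpow_nonneg (norm_nonneg _) _
    exact mul_le_mul h23 e4 hnn (by norm_num)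
  calc ‖iteratedFDeriv ℝ 2 ρ y‖
      ≤ ‖iteratedFDeriv ℝ 2 f x‖ + (2+ν) * ‖y - x‖ ^ ((1:ℝ)+ν) := hbound
    _ ≤ ‖iteratedFDeriv ℝ 2 f x‖ + 12 * R0 ^ 2 := by linarith
end

section
/- Let x ∈ E, H > 0 and ν ∈ (0,1]. Set D_{x,H} = max{1, (6‖∇f(x)‖/H)^{1/2}, 3‖∇²f(x)‖/H, (3 + ‖D³f(x)‖/H)^{1/ν}} and let L_H(x) = {z ∈ E : Ω_{x,3,H}^{(ν)}(z) ≤ f(x)}. Then every y in the convex hull of L_H(x) satisfies ‖y − x‖ ≤ D_{x,H}, and consequently ‖∇²ρ_x(y)‖ ≤ ‖∇²f(x)‖ + (2+ν)·D_{x,H}² for all such y, where ‖·‖ applied to operators denotes the operator norm. -/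
open scoped InnerProductSpace

set_option maxHeartbeats 2000000 in

/-- Lemma 3.7. For `ν ∈ (0,1]` and `H > 0`, every `y` in the convex hull of
`L_H(x) = {z : Ω_{x,3,H}^{(ν)}(z) ≤ f(x)}` satisfies `‖y − x‖ ≤ D_{x,H}` and
`‖∇²ρ_x(y)‖ ≤ ‖∇²f(x)‖ + (2+ν)D_{x,H}²`. -/
theorem statement_6
    {E : Type*} [NormedAddCommGroup E] [InnerProductSpace ℝ E] [FiniteDimensional ℝ E]
    (ν : ℝ) (hν : ν ∈ Set.Ioc (0 : ℝ) 1)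
    (f : E → ℝ) (hf : ContDiff ℝ 3 f)
    (x : E) (H : ℝ) (hH : 0 < H)
    (DxH : ℝ)
    (hD : DxH = max (max 1 ((6 * ‖gradient f x‖ / H) ^ ((1 : ℝ) / 2)))
        (max (3 * ‖iteratedFDeriv ℝ 2 f x‖ / H)
          ((3 + ‖iteratedFDeriv ℝ 3 f x‖ / H) ^ (1 / ν))))
    (Ω ρ : E → ℝ)
    (hΩ : Ω = fun y => f x + ⟪gradient f x, y - x⟫_ℝ
        + (1 / 2) * iteratedFDeriv ℝ 2 f x ![y - x, y - x]
        + (1 / 6) * iteratedFDeriv ℝ 3 f x ![y - x, y - x, y - x]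
        + (H / 6) * ‖y - x‖ ^ ((3 : ℝ) + ν))
    (hρ : ρ = fun y => (1 / 2) * iteratedFDeriv ℝ 2 f x ![y - x, y - x]
        + (1 / (3 + ν)) * ‖y - x‖ ^ ((3 : ℝ) + ν)) :
    ∀ y ∈ convexHull ℝ {z : E | Ω z ≤ f x},
      ‖y - x‖ ≤ DxH ∧
      ‖iteratedFDeriv ℝ 2 ρ y‖ ≤ ‖iteratedFDeriv ℝ 2 f x‖ + (2 + ν) * DxH ^ 2 := by
  obtain ⟨hν0, hν1⟩ := hν
  set g := gradient f x with hg
  set B := iteratedFDeriv ℝ 2 f x with hB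
  set T := iteratedFDeriv ℝ 3 f x with hT
  have hD1 : (1 : ℝ) ≤ DxH := by
    rw [hD]; exact le_trans (le_max_left _ _) (le_max_left _ _)
  -- Part 1: the sublevel set is inside the closed ball of radius DxH
  have hball : {z : E | Ω z ≤ f x} ⊆ Metric.closedBall x DxH := by
    intro z hz
    simp only [Set.mem_setOf_eq, hΩ] at hz
    rw [Metric.mem_closedBall, dist_eq_norm]
    by_contra hgt
    push_neg at hgt
    set u := z - x with hu
    set r := ‖u‖ with hr
    have hr1 : 1 < r := lt_of_le_of_lt hD1 hgt
    have hr0 : 0 < r := by linarith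
    -- bounds from the sublevel condition
    have hgb : -(‖g‖ * r) ≤ ⟪g, u⟫_ℝ := (abs_le.1 (abs_real_inner_le_norm g u)).1
    have hBb : -( ‖B‖ * (r * r)) ≤ B ![u, u] := by
      have h1 := B.le_opNorm ![u, u]
      have h2 : (∏ i, ‖(![u, u] : Fin 2 → E) i‖) = r * r := by
        simp [Fin.prod_univ_two, hr]
      rw [h2, Real.norm_eq_abs] at h1
      exact (abs_le.1 h1).1
    have hTb : -( ‖T‖ * (r * r * r)) ≤ T ![u, u, u] := by
      have h1 := T.le_opNorm ![u, u, u]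
      have h2 : (∏ i, ‖(![u, u, u] : Fin 3 → E) i‖) = r * r * r := by
        simp [Fin.prod_univ_three, mul_assoc, hr]
      rw [h2, Real.norm_eq_abs] at h1
      exact (abs_le.1 h1).1
    have hkey : (H / 6) * r ^ ((3 : ℝ) + ν)
        ≤ ‖g‖ * r + (1 / 2) * (‖B‖ * (r * r)) + (1 / 6) * (‖T‖ * (r * r * r)) := by
      linarith
    -- the three radius bounds
    have h1 : ‖g‖ < H * (r * r) / 6 := by
      have ha : (0 : ℝ) ≤ 6 * ‖g‖ / H := by positivity
      have hlt : (6 * ‖g‖ / H) ^ ((1 : ℝ) / 2) < r := by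
        refine lt_of_le_of_lt ?_ hgt
        rw [hD]; exact le_trans (le_max_right _ _) (le_max_left _ _)
      have h2 : 6 * ‖g‖ / H = ((6 * ‖g‖ / H) ^ ((1 : ℝ) / 2)) ^ (2 : ℕ) := by
        rw [← Real.rpow_natCast ((6 * ‖g‖ / H) ^ ((1 : ℝ) / 2)) 2, ← Real.rpow_mul ha]
        norm_num
      have h3 : 6 * ‖g‖ / H < r ^ (2 : ℕ) := by
        rw [h2]
        exact pow_lt_pow_left₀ hlt (Real.rpow_nonneg ha _) two_ne_zero
      rw [div_lt_iff₀ hH, sq] at h3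
      linarith
    have h2 : ‖B‖ < H * r / 3 := by
      have hlt : 3 * ‖B‖ / H < r := by
        refine lt_of_le_of_lt ?_ hgt
        rw [hD]; exact le_trans (le_max_left _ _) (le_max_right _ _)
      rw [div_lt_iff₀ hH] at hlt
      linarith
    have h3 : 3 + ‖T‖ / H < r ^ ν := by
      have hc : (0 : ℝ) ≤ 3 + ‖T‖ / H := by positivity
      have hlt : (3 + ‖T‖ / H) ^ ((1 : ℝ) / ν) < r := by
        refine lt_of_le_of_lt ?_ hgt
        rw [hD]; exact le_trans (le_max_right _ _) (le_max_right _ _)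
      have h4 : ((3 + ‖T‖ / H) ^ ((1 : ℝ) / ν)) ^ ν = 3 + ‖T‖ / H := by
        rw [← Real.rpow_mul hc, one_div, inv_mul_cancel₀ (ne_of_gt hν0), Real.rpow_one]
      calc 3 + ‖T‖ / H = ((3 + ‖T‖ / H) ^ ((1 : ℝ) / ν)) ^ ν := h4.symm
        _ < r ^ ν := Real.rpow_lt_rpow (Real.rpow_nonneg hc _) hlt hν0
    -- combine
    have hrp : r ^ ((3 : ℝ) + ν) = r ^ (3 : ℕ) * r ^ ν := by
      rw [Real.rpow_add hr0, show ((3 : ℝ)) = ((3 : ℕ) : ℝ) by norm_num, Real.rpow_natCast]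
    rw [hrp, show r ^ (3 : ℕ) = r * r * r from by ring] at hkey
    have hr3 : (0 : ℝ) < r * r * r := by positivity
    have e1 : ‖g‖ * r < H * (r * r * r) / 6 := by
      linarith [mul_lt_mul_of_pos_right h1 hr0]
    have e2 : (1 / 2) * (‖B‖ * (r * r)) < H * (r * r * r) / 6 := by
      linarith [mul_lt_mul_of_pos_right h2 (by positivity : (0:ℝ) < r * r / 2)]
    have e3 : (H / 2) * (r * r * r) + (1 / 6) * (‖T‖ * (r * r * r))
        < (H / 6) * (r * r * r * r ^ ν) := by
      have h4 := mul_lt_mul_of_pos_left h3 (mul_pos (by linarith : (0:ℝ) < H / 6) hr3)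
      have h5 : H / 6 * (r * r * r) * (3 + ‖T‖ / H) = (H / 2) * (r * r * r)
          + (1 / 6) * (‖T‖ * (r * r * r)) := by
        field_simp
        ring
      calc (H / 2) * (r * r * r) + (1 / 6) * (‖T‖ * (r * r * r))
          = H / 6 * (r * r * r) * (3 + ‖T‖ / H) := h5.symm
        _ < H / 6 * (r * r * r) * r ^ ν := h4
        _ = (H / 6) * (r * r * r * r ^ ν) := by ring
    have hpos : (0 : ℝ) < H * (r * r * r) := mul_pos hH hr3
    linarith
  have hhull : convexHull ℝ {z : E | Ω z ≤ f x} ⊆ Metric.closedBall x DxH :=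
    convexHull_min hball (convex_closedBall x DxH)
  intro y hy
  have hyx : ‖y - x‖ ≤ DxH := by
    have := hhull hy
    rwa [Metric.mem_closedBall, dist_eq_norm] at this
  refine ⟨hyx, ?_⟩
  -- Part 2: bound on the second derivative of ρ
  -- bilinear form associated to B
  let b : E →L[ℝ] E →L[ℝ] ℝ :=
    ((continuousMultilinearCurryFin1 ℝ E ℝ).toContinuousLinearEquiv :
      (ContinuousMultilinearMap ℝ (fun _ : Fin 1 => E) ℝ) →L[ℝ] (E →L[ℝ] ℝ)).comp B.curryLeft
  have hb : ∀ v w : E, b v w = B ![v, w] := by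
    intro v w
    show (continuousMultilinearCurryFin1 ℝ E ℝ) (B.curryLeft v) w = _
    rw [continuousMultilinearCurryFin1_apply, ContinuousMultilinearMap.curryLeft_apply]
    congr 1
    funext i
    fin_cases i <;> simp [Fin.snoc]
  -- real inner product as a continuous bilinear map
  let J : E →L[ℝ] E →L[ℝ] ℝ := LinearMap.mkContinuous₂ (innerₗ E) 1
    (fun v w => by simpa using abs_real_inner_le_norm v w)
  have hJ : ∀ v w : E, J v w = ⟪v, w⟫_ℝ := fun v w => rfl
  have hJi : ∀ v : E, J v = innerSL ℝ v := fun v => rfl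
  set Q1 : E →L[ℝ] E →L[ℝ] ℝ := (2⁻¹ : ℝ) • (b + b.flip) with hQ1
  set ρ' : E → (E →L[ℝ] ℝ) :=
    fun w => Q1 (w - x) + (‖w - x‖ ^ ((1 : ℝ) + ν)) • J (w - x) with hρ'
  have hsub : ∀ w : E, HasFDerivAt (fun w : E => w - x) (ContinuousLinearMap.id ℝ E) w :=
    fun w => (hasFDerivAt_id w).sub_const x
  have hd1 : ∀ w, HasFDerivAt ρ (ρ' w) w := by
    intro w
    rw [hρ]
    refine HasFDerivAt.add ?_ ?_
    · -- quadratic part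
      have hbw : HasFDerivAt (fun w : E => b (w - x)) b w := by
        have h0 := b.hasFDerivAt (x := w - x) |>.comp w (hsub w)
        rwa [ContinuousLinearMap.comp_id] at h0
      have happ := (hbw.clm_apply (hsub w)).const_mul (1 / 2 : ℝ)
      have hfe : (fun y : E => (1 / 2 : ℝ) * B ![y - x, y - x])
          = fun y : E => (1 / 2 : ℝ) * (b (y - x)) (y - x) := by
        funext y; rw [hb]
      rw [hfe]
      have he : ((1 : ℝ) / 2) • ((b (w - x)).comp (ContinuousLinearMap.id ℝ E)
          + ContinuousLinearMap.flip b (w - x)) = Q1 (w - x) := by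
        ext v
        simp only [hQ1, ContinuousLinearMap.smul_apply, ContinuousLinearMap.add_apply,
          ContinuousLinearMap.comp_apply, ContinuousLinearMap.coe_id', id_eq,
          ContinuousLinearMap.flip_apply, smul_eq_mul]
        ring
      rw [he] at happ
      exact happ
    · -- power part
      have hp : (1 : ℝ) < 3 + ν := by linarith
      have h0 := (hasFDerivAt_norm_rpow (w - x) hp).comp w (hsub w)
      have h1 := h0.const_mul (1 / (3 + ν))
      have he : (1 / (3 + ν)) • (((3 + ν) * ‖w - x‖ ^ ((3 : ℝ) + ν - 2)) •
          (innerSL ℝ) (w - x)).comp (ContinuousLinearMap.id ℝ E)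
          = (‖w - x‖ ^ ((1 : ℝ) + ν)) • J (w - x) := by
        ext v
        have h3 : (3 : ℝ) + ν ≠ 0 := by linarith
        simp only [ContinuousLinearMap.smul_apply, ContinuousLinearMap.comp_apply,
          ContinuousLinearMap.coe_id', id_eq, smul_eq_mul, hJ, innerSL_apply_apply]
        rw [show (3 : ℝ) + ν - 2 = 1 + ν by ring]
        field_simp
      rw [he] at h1
      exact h1
  have hfd : fderiv ℝ ρ = ρ' := funext fun w => (hd1 w).fderiv
  set Ψ : E → (E →L[ℝ] E →L[ℝ] ℝ) := fun w =>
    (‖w - x‖ ^ ((1 : ℝ) + ν)) • J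
      + (((1 + ν) * ‖w - x‖ ^ (ν - 1)) • J (w - x)).smulRight (J (w - x)) with hΨ
  have hd2 : ∀ w, HasFDerivAt ρ' (Q1 + Ψ w) w := by
    intro w
    rw [hρ']
    refine HasFDerivAt.add ?_ ?_
    · have h0 := Q1.hasFDerivAt (x := w - x) |>.comp w (hsub w)
      rwa [ContinuousLinearMap.comp_id] at h0
    · have hp : (1 : ℝ) < 1 + ν := by linarith
      have hgd : HasFDerivAt (fun w : E => ‖w - x‖ ^ ((1 : ℝ) + ν))
          (((1 + ν) * ‖w - x‖ ^ (ν - 1)) • J (w - x)) w := by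
        have h0 := (hasFDerivAt_norm_rpow (w - x) hp).comp w (hsub w)
        have he : ((((1 : ℝ) + ν) * ‖w - x‖ ^ ((1 : ℝ) + ν - 2)) • (innerSL ℝ) (w - x)).comp
            (ContinuousLinearMap.id ℝ E) = ((1 + ν) * ‖w - x‖ ^ (ν - 1)) • J (w - x) := by
          rw [ContinuousLinearMap.comp_id, show (1 : ℝ) + ν - 2 = ν - 1 by ring, hJi]
        rw [he] at h0
        exact h0
      have hvd : HasFDerivAt (fun w : E => J (w - x)) J w := by
        have h0 := J.hasFDerivAt (x := w - x) |>.comp w (hsub w)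
        rwa [ContinuousLinearMap.comp_id] at h0
      exact hgd.smul hvd
  have hit : ∀ m : Fin 2 → E, iteratedFDeriv ℝ 2 ρ y m = (Q1 + Ψ y) (m 0) (m 1) := by
    intro m
    rw [iteratedFDeriv_two_apply, hfd, (hd2 y).fderiv]
  -- norm bound
  have hub : ‖iteratedFDeriv ℝ 2 ρ y‖ ≤ ‖B‖ + (2 + ν) * ‖y - x‖ ^ ((1 : ℝ) + ν) := by
    have hC : (0 : ℝ) ≤ ‖B‖ + (2 + ν) * ‖y - x‖ ^ ((1 : ℝ) + ν) := by
      have := Real.rpow_nonneg (norm_nonneg (y - x)) ((1 : ℝ) + ν)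
      positivity
    refine ContinuousMultilinearMap.opNorm_le_bound hC ?_
    intro m
    rw [hit, Fin.prod_univ_two]
    set u := y - x with hu
    set k := m 0 with hk
    set v := m 1 with hv
    have hexp : ∀ c d : E, (Q1 + Ψ y) c d
        = 2⁻¹ * (B ![c, d] + B ![d, c])
          + (‖u‖ ^ ((1 : ℝ) + ν) * ⟪c, d⟫_ℝ
          + ((1 + ν) * ‖u‖ ^ (ν - 1) * ⟪u, c⟫_ℝ) * ⟪u, d⟫_ℝ) := by
      intro c d
      simp only [ContinuousLinearMap.add_apply, hQ1, hΨ, ContinuousLinearMap.smul_apply,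
        ContinuousLinearMap.flip_apply, ContinuousLinearMap.smulRight_apply,
        smul_eq_mul, hJ, hb, ← hu]
    rw [hexp]
    have hBkv : |B ![k, v]| ≤ ‖B‖ * (‖k‖ * ‖v‖) := by
      have h1 := B.le_opNorm ![k, v]
      have h2 : (∏ i, ‖(![k, v] : Fin 2 → E) i‖) = ‖k‖ * ‖v‖ := by
        simp [Fin.prod_univ_two]
      rwa [h2, Real.norm_eq_abs] at h1
    have hBvk : |B ![v, k]| ≤ ‖B‖ * (‖k‖ * ‖v‖) := by
      have h1 := B.le_opNorm ![v, k]
      have h2 : (∏ i, ‖(![v, k] : Fin 2 → E) i‖) = ‖k‖ * ‖v‖ := by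
        simp [Fin.prod_univ_two]; ring
      rwa [h2, Real.norm_eq_abs] at h1
    have hIkv : |⟪k, v⟫_ℝ| ≤ ‖k‖ * ‖v‖ := abs_real_inner_le_norm k v
    have hIuk : |⟪u, k⟫_ℝ| ≤ ‖u‖ * ‖k‖ := abs_real_inner_le_norm u k
    have hIuv : |⟪u, v⟫_ℝ| ≤ ‖u‖ * ‖v‖ := abs_real_inner_le_norm u v
    have hrnn : (0 : ℝ) ≤ ‖u‖ ^ (ν - 1) := Real.rpow_nonneg (norm_nonneg u) _
    have hrnn2 : (0 : ℝ) ≤ ‖u‖ ^ ((1 : ℝ) + ν) := Real.rpow_nonneg (norm_nonneg u) _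
    have huu : ‖u‖ ^ (ν - 1) * (‖u‖ * ‖u‖) = ‖u‖ ^ ((1 : ℝ) + ν) := by
      rcases eq_or_lt_of_le (norm_nonneg u) with h0 | h0
      · rw [← h0]
        rw [Real.zero_rpow (by linarith : (1 : ℝ) + ν ≠ 0)]
        ring
      · rw [show ‖u‖ * ‖u‖ = ‖u‖ ^ ((2 : ℝ)) by
            rw [show (2:ℝ) = ((2:ℕ) : ℝ) by norm_num, Real.rpow_natCast]; ring,
          ← Real.rpow_add h0]
        ring_nf
    have habs : |2⁻¹ * (B ![k, v] + B ![v, k])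
          + (‖u‖ ^ ((1 : ℝ) + ν) * ⟪k, v⟫_ℝ
          + ((1 + ν) * ‖u‖ ^ (ν - 1) * ⟪u, k⟫_ℝ) * ⟪u, v⟫_ℝ)|
        ≤ ‖B‖ * (‖k‖ * ‖v‖) + ‖u‖ ^ ((1 : ℝ) + ν) * (‖k‖ * ‖v‖)
          + (1 + ν) * (‖u‖ ^ (ν - 1) * ((‖u‖ * ‖k‖) * (‖u‖ * ‖v‖))) := by
      have t1 : |2⁻¹ * (B ![k, v] + B ![v, k])| ≤ ‖B‖ * (‖k‖ * ‖v‖) := by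
        rw [abs_mul]
        have := abs_add_le (B ![k, v]) (B ![v, k])
        rw [abs_of_pos (by norm_num : (0:ℝ) < (2⁻¹ : ℝ))]
        nlinarith
      have t2 : |‖u‖ ^ ((1 : ℝ) + ν) * ⟪k, v⟫_ℝ| ≤ ‖u‖ ^ ((1 : ℝ) + ν) * (‖k‖ * ‖v‖) := by
        rw [abs_mul, abs_of_nonneg hrnn2]
        exact mul_le_mul_of_nonneg_left hIkv hrnn2
      have t3 : |((1 + ν) * ‖u‖ ^ (ν - 1) * ⟪u, k⟫_ℝ) * ⟪u, v⟫_ℝ|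
          ≤ (1 + ν) * (‖u‖ ^ (ν - 1) * ((‖u‖ * ‖k‖) * (‖u‖ * ‖v‖))) := by
        rw [abs_mul, abs_mul, abs_mul, abs_of_nonneg (by linarith : (0:ℝ) ≤ 1 + ν),
          abs_of_nonneg hrnn]
        have h5 : |⟪u, k⟫_ℝ| * |⟪u, v⟫_ℝ| ≤ (‖u‖ * ‖k‖) * (‖u‖ * ‖v‖) :=
          mul_le_mul hIuk hIuv (abs_nonneg _) (by positivity)
        calc (1 + ν) * ‖u‖ ^ (ν - 1) * |⟪u, k⟫_ℝ| * |⟪u, v⟫_ℝ|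
            = (1 + ν) * (‖u‖ ^ (ν - 1) * (|⟪u, k⟫_ℝ| * |⟪u, v⟫_ℝ|)) := by ring
          _ ≤ (1 + ν) * (‖u‖ ^ (ν - 1) * ((‖u‖ * ‖k‖) * (‖u‖ * ‖v‖))) := by
              apply mul_le_mul_of_nonneg_left _ (by linarith : (0:ℝ) ≤ 1 + ν)
              exact mul_le_mul_of_nonneg_left h5 hrnn
      calc |2⁻¹ * (B ![k, v] + B ![v, k])
          + (‖u‖ ^ ((1 : ℝ) + ν) * ⟪k, v⟫_ℝ
          + ((1 + ν) * ‖u‖ ^ (ν - 1) * ⟪u, k⟫_ℝ) * ⟪u, v⟫_ℝ)|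
          ≤ |2⁻¹ * (B ![k, v] + B ![v, k])| + |‖u‖ ^ ((1 : ℝ) + ν) * ⟪k, v⟫_ℝ|
            + |((1 + ν) * ‖u‖ ^ (ν - 1) * ⟪u, k⟫_ℝ) * ⟪u, v⟫_ℝ| := by
            have ha1 := abs_add_le (‖u‖ ^ ((1 : ℝ) + ν) * ⟪k, v⟫_ℝ) (((1 + ν) * ‖u‖ ^ (ν - 1) * ⟪u, k⟫_ℝ) * ⟪u, v⟫_ℝ)
            have ha2 := abs_add_le (2⁻¹ * (B ![k, v] + B ![v, k])) (‖u‖ ^ ((1 : ℝ) + ν) * ⟪k, v⟫_ℝ + ((1 + ν) * ‖u‖ ^ (ν - 1) * ⟪u, k⟫_ℝ) * ⟪u, v⟫_ℝ)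
            linarith
        _ ≤ _ := by linarith
    rw [Real.norm_eq_abs]
    refine habs.trans ?_
    have : ‖u‖ ^ (ν - 1) * ((‖u‖ * ‖k‖) * (‖u‖ * ‖v‖))
        = ‖u‖ ^ ((1 : ℝ) + ν) * (‖k‖ * ‖v‖) := by
      rw [← huu]; ring
    rw [this]
    nlinarith [mul_nonneg (norm_nonneg k) (norm_nonneg v)]
  -- conclude
  refine hub.trans ?_
  have hpow : ‖y - x‖ ^ ((1 : ℝ) + ν) ≤ DxH ^ 2 := by
    calc ‖y - x‖ ^ ((1 : ℝ) + ν) ≤ DxH ^ ((1 : ℝ) + ν) :=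
          Real.rpow_le_rpow (norm_nonneg _) hyx (by linarith)
      _ ≤ DxH ^ ((2 : ℝ)) := Real.rpow_le_rpow_of_exponent_le hD1 (by linarith)
      _ = DxH ^ (2 : ℕ) := by
          rw [show (2 : ℝ) = ((2 : ℕ) : ℝ) by norm_num, Real.rpow_natCast]
  nlinarith [Real.rpow_nonneg (norm_nonneg (y - x)) ((1 : ℝ) + ν)]
end

section
/- Suppose (H1)–(H3) hold, g has a global minimizer y*, and let {y_k} be generated by Algorithm A. Then for all k ≥ 0, g(y_k) − g(y_{k+1}) ≥ [σ_q/(q·(max{2L₀, 4L})^{q−1}·N^q)]·‖∇g(y_k)‖^q, and for every integer T ≥ 1, min_{0≤k≤T−1} ‖∇g(y_k)‖ ≤ N·[q·(max{2L₀, 4L})^{q−1}·(g(y₀) − g(y*))/σ_q]^{1/q}·(1/T)^{1/q}. -/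
open scoped InnerProductSpace

/-- The Bregman distance `β_d(u, v) = d(v) − d(u) − ⟨∇d(u), v − u⟩`. -/
noncomputable def breg {E : Type*} [NormedAddCommGroup E] [InnerProductSpace ℝ E]
    [CompleteSpace E] (d : E → ℝ) (u v : E) : ℝ :=
  d v - d u - ⟪gradient d u, v - u⟫_ℝ

/-- One successful step of the adaptive Bregman proximal gradient method with coefficient `M`:
`w` is a global minimizer of `z ↦ ⟨∇g(yk), z − yk⟩ + M·β_d(yk, z)` and satisfies the
sufficient-decrease acceptance test. -/
noncomputable def stepOK {E : Type*} [NormedAddCommGroup E] [InnerProductSpace ℝ E]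
    [CompleteSpace E] (g d : E → ℝ) (M : ℝ) (yk w : E) : Prop :=
  (∀ z : E, ⟪gradient g yk, w - yk⟫_ℝ + M * breg d yk w
      ≤ ⟪gradient g yk, z - yk⟫_ℝ + M * breg d yk z) ∧
  g w ≤ g yk + ⟪gradient g yk, w - yk⟫_ℝ + M * breg d yk w

/-- Algorithm A (adaptive Bregman proximal gradient method): `L 0 = L₀` and, for each `k`,
`i k` is the smallest integer `≥ 0` such that the regularized step with coefficient
`2^{i k}·L k` exists and is accepted, `y (k+1)` is that step, and `L (k+1) = 2^{i k − 1}·L k`. -/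
noncomputable def algA {E : Type*} [NormedAddCommGroup E] [InnerProductSpace ℝ E]
    [CompleteSpace E] (g d : E → ℝ) (L0 : ℝ) (y : ℕ → E) (L : ℕ → ℝ) (i : ℕ → ℕ) : Prop :=
  L 0 = L0 ∧ ∀ k : ℕ,
    stepOK g d ((2 : ℝ) ^ i k * L k) (y k) (y (k + 1)) ∧
    (∀ j : ℕ, j < i k → ¬ ∃ w : E, stepOK g d ((2 : ℝ) ^ j * L k) (y k) w) ∧
    L (k + 1) = (2 : ℝ) ^ i k * L k / 2

lemma exists_step_aux {E : Type*} [NormedAddCommGroup E] [InnerProductSpace ℝ E]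
    [FiniteDimensional ℝ E]
    (d g : E → ℝ) (L q σq : ℝ) (hL : 0 < L)
    (hH1 : ∀ x y : E, g x ≤ g y + ⟪gradient g y, x - y⟫_ℝ + L * breg d y x)
    (hq : 2 ≤ q) (hσq : 0 < σq)
    (hd2 : ContDiff ℝ 2 d)
    (hH2 : ∀ x y : E, σq / q * ‖x - y‖ ^ q ≤ breg d y x)
    (M : ℝ) (hM : L ≤ M) (yk : E) : ∃ w, stepOK g d M yk w := by
  have hM0 : 0 < M := lt_of_lt_of_le hL hM
  have hq0 : 0 < q := by linarith
  set a := gradient g yk with ha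
  set c' := M * (σq / q) with hc'def
  have hc' : 0 < c' := by positivity
  set F := fun z : E => ⟪a, z - yk⟫_ℝ + M * breg d yk z with hF
  have hbreg_nonneg : ∀ u v : E, 0 ≤ breg d u v := by
    intro u v
    refine le_trans ?_ (hH2 v u)
    have := Real.rpow_nonneg (norm_nonneg (v - u)) q
    positivity
  have hFlow : ∀ z : E, c' * ‖z - yk‖ ^ q - ‖a‖ * ‖z - yk‖ ≤ F z := by
    intro z
    have h1 : σq / q * ‖z - yk‖ ^ q ≤ breg d yk z := hH2 z yk
    have h2 : M * (σq / q * ‖z - yk‖ ^ q) ≤ M * breg d yk z :=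
      mul_le_mul_of_nonneg_left h1 hM0.le
    have h3 : |⟪a, z - yk⟫_ℝ| ≤ ‖a‖ * ‖z - yk‖ := abs_real_inner_le_norm a (z - yk)
    have h4 : -(‖a‖ * ‖z - yk‖) ≤ ⟪a, z - yk⟫_ℝ := by
      rcases abs_le.mp h3 with ⟨h, _⟩; linarith
    have : c' * ‖z - yk‖ ^ q = M * (σq / q * ‖z - yk‖ ^ q) := by ring
    simp only [hF]; linarith
  have hcont : Continuous F := by
    have hd' : Continuous d := hd2.continuous
    simp only [hF, breg]
    have h1 : Continuous fun z : E => ⟪a, z - yk⟫_ℝ :=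
      continuous_const.inner (continuous_id.sub continuous_const)
    have h2 : Continuous fun z : E => ⟪gradient d yk, z - yk⟫_ℝ :=
      continuous_const.inner (continuous_id.sub continuous_const)
    exact h1.add (continuous_const.mul ((hd'.sub continuous_const).sub h2))
  set R := (‖a‖ / c') ^ (1 / (q - 1)) with hRdef
  have hR0 : 0 ≤ R := Real.rpow_nonneg (by positivity) _
  obtain ⟨w, hwmem, hwmin⟩ := (isCompact_closedBall yk (R + 1)).exists_isMinOn
    ⟨yk, by simp [Metric.mem_closedBall]; linarith⟩ hcont.continuousOn
  have hFyk : F yk = 0 := by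
    simp [hF, breg, inner_zero_right]
  have hFw0 : F w ≤ 0 := by
    simpa [hFyk] using hwmin (by simp [Metric.mem_closedBall]; linarith :
      yk ∈ Metric.closedBall yk (R + 1))
  have key : ∀ z : E, F w ≤ F z := by
    intro z
    by_cases hz : z ∈ Metric.closedBall yk (R + 1)
    · exact hwmin hz
    · have hu : R + 1 < ‖z - yk‖ := by
        simp only [Metric.mem_closedBall, dist_eq_norm, not_le] at hz
        exact hz
      set u := ‖z - yk‖ with hudef
      have hu0 : 0 < u := by linarith
      have hRu : R ≤ u := by linarith
      have h1 : ‖a‖ / c' ≤ u ^ (q - 1) := by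
        have h := Real.rpow_le_rpow hR0 hRu (by linarith : (0:ℝ) ≤ q - 1)
        rwa [hRdef, one_div, Real.rpow_inv_rpow (by positivity)
          (by intro h'; rw [sub_eq_zero] at h'; linarith)] at h
      have h2 : ‖a‖ ≤ c' * u ^ (q - 1) := by
        rw [div_le_iff₀ hc'] at h1; linarith [h1]
      have h3 : u ^ q = u ^ (q - 1) * u := by
        have h := Real.rpow_add hu0 (q - 1) 1
        rw [Real.rpow_one] at h
        rw [show q - 1 + 1 = q by ring] at h
        exact h
      have h4 : 0 ≤ c' * u ^ q - ‖a‖ * u := by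
        rw [h3]; nlinarith [hu0.le]
      have := hFlow z
      rw [← hudef] at this
      linarith
  refine ⟨w, fun z => key z, ?_⟩
  have hacc := hH1 w yk
  have hb := hbreg_nonneg yk w
  have : L * breg d yk w ≤ M * breg d yk w := mul_le_mul_of_nonneg_right hM hb
  linarith

lemma grad_rel {E : Type*} [NormedAddCommGroup E] [InnerProductSpace ℝ E]
    [CompleteSpace E] (d g : E → ℝ) (hd2 : ContDiff ℝ 2 d) (M : ℝ)
    (yk w : E) (h : stepOK g d M yk w) :
    gradient g yk = M • (gradient d yk - gradient d w) := by
  set a := gradient g yk with ha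
  set b := gradient d yk with hb
  set F := fun z : E => ⟪a, z - yk⟫_ℝ + M * breg d yk z with hF
  have hloc : IsLocalMin F w := Filter.Eventually.of_forall h.1
  have hinner : ∀ c : E, (fun z : E => ⟪c, z - yk⟫_ℝ) = fun z => ⟪c, z⟫_ℝ - ⟪c, yk⟫_ℝ :=
    fun c => funext fun z => inner_sub_right c z yk
  have h1 : HasFDerivAt (fun z : E => ⟪a, z - yk⟫_ℝ) (innerSL ℝ a) w := by
    rw [hinner a]
    exact ((innerSL ℝ a).hasFDerivAt).sub_const _
  have hbder : HasFDerivAt (fun z : E => ⟪b, z - yk⟫_ℝ) (innerSL ℝ b) w := by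
    rw [hinner b]
    exact ((innerSL ℝ b).hasFDerivAt).sub_const _
  have hd' : HasFDerivAt d (fderiv ℝ d w) w :=
    ((hd2.differentiable (by norm_num)) w).hasFDerivAt
  have h2 : HasFDerivAt (fun z : E => d z - d yk - ⟪b, z - yk⟫_ℝ)
      (fderiv ℝ d w - innerSL ℝ b) w := (hd'.sub_const _).sub hbder
  have h3 : HasFDerivAt F (innerSL ℝ a + M • (fderiv ℝ d w - innerSL ℝ b)) w := by
    simp only [hF, breg, ← hb]
    exact h1.add (h2.const_mul M)
  have hD0 := hloc.hasFDerivAt_eq_zero h3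
  have hv : ∀ v : E, ⟪a + M • gradient d w - M • b, v⟫_ℝ = 0 := by
    intro v
    have hDv := DFunLike.congr_fun hD0 v
    simp only [ContinuousLinearMap.add_apply, ContinuousLinearMap.smul_apply,
      ContinuousLinearMap.sub_apply, innerSL_apply_apply, ContinuousLinearMap.zero_apply,
      smul_eq_mul] at hDv
    have hfd : (fderiv ℝ d w) v = ⟪gradient d w, v⟫_ℝ :=
      (InnerProductSpace.toDual_symm_apply (y := fderiv ℝ d w) (x := v)).symm
    rw [hfd] at hDv
    simp only [inner_add_left, inner_sub_left, real_inner_smul_left]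
    linarith
  have hzero : a + M • gradient d w - M • b = 0 := by
    have := hv (a + M • gradient d w - M • b)
    exact inner_self_eq_zero.mp this
  have : a - (M • b - M • gradient d w) = 0 := by
    rw [← hzero]; abel
  rw [smul_sub]
  exact sub_eq_zero.mp this

lemma step_decrease {E : Type*} [NormedAddCommGroup E] [InnerProductSpace ℝ E]
    [CompleteSpace E] (d g : E → ℝ) (M : ℝ)
    (yk w : E) (h : stepOK g d M yk w)
    (hrel : gradient g yk = M • (gradient d yk - gradient d w)) :
    M * breg d w yk ≤ g yk - g w := by
  have hacc := h.2
  rw [hrel] at hacc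
  have key : ⟪M • (gradient d yk - gradient d w), w - yk⟫_ℝ + M * breg d yk w
      = -(M * breg d w yk) := by
    simp only [breg, real_inner_smul_left, inner_sub_left, inner_sub_right]
    ring
  linarith

lemma grad_lipschitz {E : Type*} [NormedAddCommGroup E] [InnerProductSpace ℝ E]
    [FiniteDimensional ℝ E] (d : E → ℝ) (hd2 : ContDiff ℝ 2 d)
    (s : Set E) (hs : Convex ℝ s) (N : ℝ) (hN : ∀ z ∈ s, ‖iteratedFDeriv ℝ 2 d z‖ ≤ N)
    (u v : E) (hu : u ∈ s) (hv : v ∈ s) :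
    ‖gradient d u - gradient d v‖ ≤ N * ‖u - v‖ := by
  have hdiff : ContDiff ℝ 1 (fderiv ℝ d) := hd2.fderiv_right (by norm_num)
  have hder : ∀ x ∈ s, HasFDerivWithinAt (fderiv ℝ d) (fderiv ℝ (fderiv ℝ d) x) s x :=
    fun x _ => ((hdiff.differentiable one_ne_zero) x).hasFDerivAt.hasFDerivWithinAt
  have hbound : ∀ x ∈ s, ‖fderiv ℝ (fderiv ℝ d) x‖ ≤ N := by
    intro x hx
    have h1 : ‖fderiv ℝ (fderiv ℝ d) x‖ = ‖iteratedFDeriv ℝ 1 (fderiv ℝ d) x‖ := by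
      rw [← norm_iteratedFDeriv_zero (𝕜 := ℝ) (f := fderiv ℝ (fderiv ℝ d)) (x := x),
        norm_iteratedFDeriv_fderiv]
    rw [h1, norm_iteratedFDeriv_fderiv]
    exact hN x hx
  have hmv := hs.norm_image_sub_le_of_norm_hasFDerivWithin_le hder hbound hv hu
  have heq : ‖gradient d u - gradient d v‖ = ‖fderiv ℝ d u - fderiv ℝ d v‖ := by
    rw [show gradient d u - gradient d v
        = (InnerProductSpace.toDual ℝ E).symm (fderiv ℝ d u - fderiv ℝ d v) from by
      rw [map_sub]; rfl, LinearIsometryEquiv.norm_map]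
  rw [heq]
  exact hmv

/-- Theorem A.2. Under (H1)–(H3), Algorithm A satisfies the per-iteration
decrease `g(y_k) − g(y_{k+1}) ≥ [σ_q/(q·max{2L₀,4L}^{q−1}·N^q)]·‖∇g(y_k)‖^q`, and after `T`
iterations `min_{0≤k≤T−1} ‖∇g(y_k)‖ ≤ N·[q·max{2L₀,4L}^{q−1}(g(y₀)−g(y*))/σ_q]^{1/q}·(1/T)^{1/q}`. -/
theorem statement_13
    {E : Type*} [NormedAddCommGroup E] [InnerProductSpace ℝ E] [FiniteDimensional ℝ E]
    (d : E → ℝ) (hd : ConvexOn ℝ Set.univ d)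
    (g : E → ℝ) (hg : Differentiable ℝ g)
    (L : ℝ) (hL : 0 < L)
    (hH1 : ∀ x y : E, g x ≤ g y + ⟪gradient g y, x - y⟫_ℝ + L * breg d y x)
    (q σq : ℝ) (hq : 2 ≤ q) (hσq : 0 < σq)
    (hd2 : ContDiff ℝ 2 d)
    (hH2 : ∀ x y : E, σq / q * ‖x - y‖ ^ q ≤ breg d y x)
    (L0 : ℝ) (hL0 : 0 < L0)
    (y : ℕ → E) (Lk : ℕ → ℝ) (ik : ℕ → ℕ)
    (halg : algA g d L0 y Lk ik)
    (N : ℝ)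
    (hH3 : ∀ z ∈ convexHull ℝ {w : E | g w ≤ g (y 0)}, ‖iteratedFDeriv ℝ 2 d z‖ ≤ N)
    (ystar : E) (hmin : ∀ z : E, g ystar ≤ g z) :
    (∀ k : ℕ,
      σq / (q * max (2 * L0) (4 * L) ^ (q - 1) * N ^ q) * ‖gradient g (y k)‖ ^ q
        ≤ g (y k) - g (y (k + 1))) ∧
    ∀ T : ℕ, 1 ≤ T → ∃ k < T,
      ‖gradient g (y k)‖ ≤
        N * (q * max (2 * L0) (4 * L) ^ (q - 1) * (g (y 0) - g ystar) / σq) ^ (1 / q)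
          * ((1 : ℝ) / T) ^ (1 / q) := by
  obtain ⟨hL0eq, hstep⟩ := halg
  have hq0 : (0:ℝ) < q := by linarith
  have hqne : q ≠ 0 := ne_of_gt hq0
  set Mx := max (2 * L0) (4 * L) with hMxdef
  have hLpos : ∀ k, 0 < Lk k := by
    intro k; induction k with
    | zero => rw [hL0eq]; exact hL0
    | succ n ih => rw [(hstep n).2.2]; positivity
  have hMkpos : ∀ k, 0 < (2:ℝ) ^ ik k * Lk k := by
    intro k; have := hLpos k; positivity
  have hrel : ∀ k, gradient g (y k)
      = ((2:ℝ) ^ ik k * Lk k) • (gradient d (y k) - gradient d (y (k+1))) :=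
    fun k => grad_rel d g hd2 _ (y k) (y (k+1)) (hstep k).1
  have hrp : ∀ k, (0:ℝ) ≤ ‖y k - y (k+1)‖ ^ q := fun k => Real.rpow_nonneg (norm_nonneg _) q
  have hdecr : ∀ k, ((2:ℝ) ^ ik k * Lk k) * ((σq/q) * ‖y k - y (k+1)‖ ^ q)
      ≤ g (y k) - g (y (k+1)) := by
    intro k
    have hbd := step_decrease d g _ (y k) (y (k+1)) (hstep k).1 (hrel k)
    have h2 := hH2 (y k) (y (k+1))
    have h3 := mul_le_mul_of_nonneg_left h2 (hMkpos k).le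
    linarith
  have hmono : ∀ k, g (y (k+1)) ≤ g (y k) := by
    intro k
    have h0 : 0 ≤ ((2:ℝ) ^ ik k * Lk k) * ((σq/q) * ‖y k - y (k+1)‖ ^ q) := by
      have h1 := hMkpos k; have h2 := hrp k; positivity
    linarith [hdecr k]
  have hsub : ∀ k, g (y k) ≤ g (y 0) := by
    intro k; induction k with
    | zero => exact le_rfl
    | succ n ih => exact le_trans (hmono n) ih
  have hmem : ∀ k, y k ∈ convexHull ℝ {w : E | g w ≤ g (y 0)} :=
    fun k => subset_convexHull ℝ _ (hsub k)
  have hN0 : 0 ≤ N := le_trans (norm_nonneg _) (hH3 (y 0) (hmem 0))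
  have hgn : ∀ k, ‖gradient g (y k)‖ ≤ ((2:ℝ) ^ ik k * Lk k) * N * ‖y k - y (k+1)‖ := by
    intro k
    have hlip := grad_lipschitz d hd2 _ (convex_convexHull ℝ _) N hH3 (y k) (y (k+1))
      (hmem k) (hmem (k+1))
    rw [hrel k, norm_smul, Real.norm_eq_abs, abs_of_pos (hMkpos k)]
    calc (2:ℝ) ^ ik k * Lk k * ‖gradient d (y k) - gradient d (y (k+1))‖
        ≤ (2:ℝ) ^ ik k * Lk k * (N * ‖y k - y (k+1)‖) :=
          mul_le_mul_of_nonneg_left hlip (hMkpos k).le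
      _ = (2:ℝ) ^ ik k * Lk k * N * ‖y k - y (k+1)‖ := by ring
  have hexists : ∀ (M : ℝ), L ≤ M → ∀ yk, ∃ w, stepOK g d M yk w :=
    fun M hM yk => exists_step_aux d g L q σq hL hH1 hq hσq hd2 hH2 M hM yk
  have hMle : ∀ k, (2:ℝ) ^ ik k * Lk k ≤ max (Lk k) (2*L) := by
    intro k
    rcases Nat.eq_zero_or_pos (ik k) with h0 | hpos
    · rw [h0]; simpa using le_max_left (Lk k) (2*L)
    · have hlt : (2:ℝ) ^ (ik k - 1) * Lk k < L := by
        by_contra hge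
        push_neg at hge
        exact (hstep k).2.1 (ik k - 1) (by omega) (hexists _ hge (y k))
      have h2 : (2:ℝ) ^ (ik k) = 2 * 2 ^ (ik k - 1) := by
        rw [← pow_succ']
        congr 1
        omega
      have h3 : (2:ℝ) ^ ik k * Lk k = 2 * ((2:ℝ) ^ (ik k - 1) * Lk k) := by rw [h2]; ring
      rw [h3]
      have := le_max_right (Lk k) (2*L)
      linarith
  have hB0 : 0 < max L0 (2*L) := lt_max_iff.mpr (Or.inl hL0)
  have hLkB : ∀ k, Lk k ≤ max L0 (2*L) := by
    intro k; induction k with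
    | zero => rw [hL0eq]; exact le_max_left _ _
    | succ n ih =>
      rw [(hstep n).2.2]
      have h1 := hMle n
      have h2 : max (Lk n) (2*L) ≤ max L0 (2*L) := max_le ih (le_max_right _ _)
      linarith
  have hMkMx : ∀ k, (2:ℝ) ^ ik k * Lk k ≤ Mx := by
    intro k
    have h1 := hMle k
    have h2 : max (Lk k) (2*L) ≤ max L0 (2*L) := max_le (hLkB k) (le_max_right _ _)
    have h3 : max L0 (2*L) ≤ Mx :=
      max_le (le_max_of_le_left (by linarith)) (le_max_of_le_right (by linarith))
    linarith
  have hMx0 : 0 < Mx := lt_max_iff.mpr (Or.inl (by linarith))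
  have claim1 : ∀ k, σq / (q * Mx ^ (q-1) * N ^ q) * ‖gradient g (y k)‖ ^ q
      ≤ g (y k) - g (y (k+1)) := by
    intro k
    have hMk0 := hMkpos k
    have hdecrk := hdecr k
    have hgnk := hgn k
    have hMkMxk := hMkMx k
    have hrpk := hrp k
    set Mk := (2:ℝ) ^ ik k * Lk k with hMkdef
    rcases eq_or_lt_of_le (norm_nonneg (gradient g (y k))) with hG0 | hG0
    · rw [← hG0, Real.zero_rpow hqne, mul_zero]
      have h0 : 0 ≤ Mk * (σq / q * ‖y k - y (k+1)‖ ^ q) :=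
        mul_nonneg hMk0.le (mul_nonneg (by positivity) hrpk)
      linarith
    · set G := ‖gradient g (y k)‖ with hGdef
      have hN' : 0 < N := by
        rcases hN0.lt_or_eq with h | h
        · exact h
        · exfalso
          rw [← h] at hgnk
          simp only [mul_zero, zero_mul] at hgnk
          linarith
      have hΔ0 : 0 < ‖y k - y (k+1)‖ := by
        nlinarith [norm_nonneg (y k - y (k+1)), mul_pos hMk0 hN']
      have hdiv : G / (Mk * N) ≤ ‖y k - y (k+1)‖ := by
        rw [div_le_iff₀ (by positivity)]
        calc G ≤ Mk * N * ‖y k - y (k+1)‖ := hgnk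
          _ = ‖y k - y (k+1)‖ * (Mk * N) := by ring
      have hpow : (G / (Mk*N)) ^ q ≤ ‖y k - y (k+1)‖ ^ q :=
        Real.rpow_le_rpow (by positivity) hdiv hq0.le
      have hsplit : Mk ^ q = Mk ^ (q-1) * Mk := by
        have h := Real.rpow_add hMk0 (q-1) 1
        rw [Real.rpow_one] at h
        rw [show q - 1 + 1 = q by ring] at h
        exact h
      have e1 : (G/(Mk*N)) ^ q = G ^ q / (Mk ^ (q-1) * Mk * N ^ q) := by
        rw [Real.div_rpow hG0.le (by positivity), Real.mul_rpow hMk0.le hN'.le, hsplit]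
      have hMq1 : (0:ℝ) < Mk ^ (q-1) := Real.rpow_pos_of_pos hMk0 _
      have hNq : (0:ℝ) < N ^ q := Real.rpow_pos_of_pos hN' _
      have e2 : Mk * ((σq/q) * (G/(Mk*N)) ^ q) = σq / (q * Mk ^ (q-1) * N ^ q) * G ^ q := by
        rw [e1]
        field_simp
      have hmono2 : Mk ^ (q-1) ≤ Mx ^ (q-1) :=
        Real.rpow_le_rpow hMk0.le hMkMxk (by linarith)
      have hcmp : σq / (q * Mx ^ (q-1) * N ^ q) * G ^ q
          ≤ σq / (q * Mk ^ (q-1) * N ^ q) * G ^ q := by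
        have hGq : 0 ≤ G ^ q := Real.rpow_nonneg hG0.le q
        have hden1 : 0 < q * Mk ^ (q-1) * N ^ q := by positivity
        have hden2 : q * Mk ^ (q-1) * N ^ q ≤ q * Mx ^ (q-1) * N ^ q := by nlinarith
        have := div_le_div_of_nonneg_left hσq.le hden1 hden2
        exact mul_le_mul_of_nonneg_right this hGq
      calc σq / (q * Mx ^ (q-1) * N ^ q) * G ^ q
          ≤ σq / (q * Mk ^ (q-1) * N ^ q) * G ^ q := hcmp
        _ = Mk * ((σq/q) * (G/(Mk*N)) ^ q) := e2.symm
        _ ≤ Mk * ((σq/q) * ‖y k - y (k+1)‖ ^ q) := by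
            have h := mul_le_mul_of_nonneg_left hpow (by positivity : (0:ℝ) ≤ σq/q)
            exact mul_le_mul_of_nonneg_left h hMk0.le
        _ ≤ g (y k) - g (y (k+1)) := hdecrk
  refine ⟨claim1, ?_⟩
  intro T hT
  rcases hN0.lt_or_eq with hNpos | hNeq
  · set Ck := σq / (q * Mx ^ (q-1) * N ^ q) with hCk
    have hMxq : 0 < Mx ^ (q-1) := Real.rpow_pos_of_pos hMx0 _
    have hNq : 0 < N ^ q := Real.rpow_pos_of_pos hNpos _
    have hCk0 : 0 < Ck := by rw [hCk]; positivity
    set D := g (y 0) - g ystar with hD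
    have hD0 : 0 ≤ D := by rw [hD]; linarith [hmin (y 0)]
    have hsum : ∑ k ∈ Finset.range T, Ck * ‖gradient g (y k)‖ ^ q ≤ D := by
      calc ∑ k ∈ Finset.range T, Ck * ‖gradient g (y k)‖ ^ q
          ≤ ∑ k ∈ Finset.range T, (g (y k) - g (y (k+1))) :=
            Finset.sum_le_sum (fun k _ => claim1 k)
        _ = g (y 0) - g (y T) := Finset.sum_range_sub' (fun k => g (y k)) T
        _ ≤ D := by rw [hD]; linarith [hmin (y T)]
    obtain ⟨k0, hk0mem, hk0min⟩ := Finset.exists_min_image (Finset.range T)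
      (fun k => ‖gradient g (y k)‖) ⟨0, Finset.mem_range.mpr (by omega)⟩
    set m := ‖gradient g (y k0)‖ with hm
    have hm0 : 0 ≤ m := norm_nonneg _
    have hlb : ∀ k ∈ Finset.range T, Ck * m ^ q ≤ Ck * ‖gradient g (y k)‖ ^ q := by
      intro k hk
      exact mul_le_mul_of_nonneg_left
        (Real.rpow_le_rpow hm0 (hk0min k hk) hq0.le) hCk0.le
    have hcard := Finset.card_nsmul_le_sum (Finset.range T) _ _ hlb
    rw [Finset.card_range, nsmul_eq_mul] at hcard
    have hT0 : (0:ℝ) < T := by exact_mod_cast hT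
    have hkey : m ^ q ≤ D / (Ck * T) := by
      rw [le_div_iff₀ (by positivity)]
      have he : m ^ q * (Ck * T) = (T:ℝ) * (Ck * m ^ q) := by ring
      linarith [le_trans hcard hsum]
    have h5 : m ≤ (D / (Ck * T)) ^ (1/q) := by
      have h := Real.rpow_le_rpow (Real.rpow_nonneg hm0 q) hkey (by positivity : (0:ℝ) ≤ 1/q)
      rw [one_div] at h ⊢
      rwa [Real.rpow_rpow_inv hm0 hqne] at h
    have hA0 : 0 ≤ q * Mx ^ (q-1) * D / σq := by positivity
    have harg : D / (Ck * T) = N ^ q * (q * Mx ^ (q-1) * D / σq * (1/T)) := by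
      rw [hCk]
      field_simp
    have hNq1 : (N ^ q) ^ (1/q) = N := by
      rw [one_div]; exact Real.rpow_rpow_inv hN0 hqne
    refine ⟨k0, Finset.mem_range.mp hk0mem, ?_⟩
    calc ‖gradient g (y k0)‖ ≤ (D / (Ck * T)) ^ (1/q) := h5
      _ = N * (q * Mx ^ (q-1) * D / σq) ^ (1/q) * ((1:ℝ)/T) ^ (1/q) := by
          rw [harg, Real.mul_rpow hNq.le (by positivity),
            Real.mul_rpow hA0 (by positivity), hNq1, ← mul_assoc]
  · refine ⟨0, by omega, ?_⟩
    have hgn0 := hgn 0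
    rw [← hNeq] at hgn0 ⊢
    simp only [mul_zero, zero_mul] at hgn0 ⊢
    linarith [norm_nonneg (gradient g (y 0))]
end

section
/- Suppose (H1)–(H3) hold, (H4) holds with μ = 0, and g has a global minimizer y*. Let {y_k} be generated by Algorithm A and set M = max{2L₀, 4L}. If T = 3s for some integer s ≥ 1, then min_{0≤k≤T−1} ‖∇g(y_k)‖ ≤ M·N·[q·β_d(y₀, y*)/σ_q]^{1/q}·(3/T)^{2/q}. -/
open scoped InnerProductSpace

section Aux

variable {E : Type*} [NormedAddCommGroup E] [InnerProductSpace ℝ E] [CompleteSpace E]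

lemma breg_three (d : E → ℝ) (a b c : E) :
    breg d a c = breg d a b + breg d b c + ⟪gradient d b - gradient d a, c - b⟫_ℝ := by
  simp only [breg, inner_sub_left, inner_sub_right]
  ring

lemma breg_symm_sum (d : E → ℝ) (u v : E) :
    ⟪gradient d u - gradient d v, u - v⟫_ℝ = breg d v u + breg d u v := by
  simp only [breg, inner_sub_left, inner_sub_right, real_inner_comm u]
  ring

lemma step_hasFDerivAt (g d : E → ℝ) (hd : Differentiable ℝ d) (c : ℝ) (yk : E) (z : E) :
    HasFDerivAt (fun z => ⟪gradient g yk, z - yk⟫_ℝ + c * breg d yk z)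
      (innerSL ℝ (gradient g yk) + c • ((fderiv ℝ d z) - innerSL ℝ (gradient d yk))) z := by
  have h1 : HasFDerivAt (fun z : E => ⟪gradient g yk, z - yk⟫_ℝ)
      (innerSL ℝ (gradient g yk)) z := by
    have := (innerSL ℝ (gradient g yk)).hasFDerivAt (x := z)
    simpa [inner_sub_right] using this.sub_const ⟪gradient g yk, yk⟫_ℝ
  have h2 : HasFDerivAt (fun z : E => breg d yk z)
      ((fderiv ℝ d z) - innerSL ℝ (gradient d yk)) z := by
    have hd' := (hd z).hasFDerivAt
    have h3 : HasFDerivAt (fun z : E => ⟪gradient d yk, z - yk⟫_ℝ)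
        (innerSL ℝ (gradient d yk)) z := by
      have := (innerSL ℝ (gradient d yk)).hasFDerivAt (x := z)
      simpa [inner_sub_right] using this.sub_const ⟪gradient d yk, yk⟫_ℝ
    exact (hd'.sub_const (d yk)).sub h3
  exact h1.add (h2.const_smul c)

lemma inner_gradient_eq {d : E → ℝ} (z v : E) : ⟪gradient d z, v⟫_ℝ = fderiv ℝ d z v :=
  InnerProductSpace.toDual_symm_apply

lemma stepOK_foc {g d : E → ℝ} (hd : Differentiable ℝ d) {c : ℝ} (hc : c ≠ 0)
    {yk w : E} (h : stepOK g d c yk w) :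
    gradient g yk = c • (gradient d yk - gradient d w) := by
  have hmin : IsLocalMin (fun z => ⟪gradient g yk, z - yk⟫_ℝ + c * breg d yk z) w :=
    Filter.Eventually.of_forall h.1
  have hz := hmin.hasFDerivAt_eq_zero (step_hasFDerivAt g d hd c yk w)
  apply ext_inner_left ℝ
  intro v
  have := congrArg (fun T : E →L[ℝ] ℝ => T v) hz
  simp only [ContinuousLinearMap.add_apply, ContinuousLinearMap.smul_apply,
    ContinuousLinearMap.sub_apply, innerSL_apply_apply, ContinuousLinearMap.zero_apply] at this
  rw [← inner_gradient_eq] at this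
  simp only [inner_smul_right, inner_sub_right, smul_eq_mul] at this ⊢
  rw [real_inner_comm (gradient g yk) v, real_inner_comm (gradient d yk) v,
    real_inner_comm (gradient d w) v]
  linarith

lemma norm_fderiv_fderiv (d : E → ℝ) (x : E) :
    ‖fderiv ℝ (fderiv ℝ d) x‖ = ‖iteratedFDeriv ℝ 2 d x‖ := by
  rw [← norm_iteratedFDeriv_fderiv (n := 1), ← norm_iteratedFDeriv_fderiv (n := 0),
    norm_iteratedFDeriv_zero]

lemma grad_lip {d : E → ℝ} (hd2 : ContDiff ℝ 2 d) {S : Set E} (hS : Convex ℝ S) {N : ℝ}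
    (hN : ∀ z ∈ S, ‖iteratedFDeriv ℝ 2 d z‖ ≤ N) {u v : E} (hu : u ∈ S) (hv : v ∈ S) :
    ‖gradient d u - gradient d v‖ ≤ N * ‖u - v‖ := by
  have hdd : ContDiff ℝ 1 (fderiv ℝ d) := (contDiff_succ_iff_fderiv.mp (by exact_mod_cast hd2 : ContDiff ℝ ((1:ℕ)+1) d)).2.2
  have h1 : ‖fderiv ℝ d u - fderiv ℝ d v‖ ≤ N * ‖u - v‖ := by
    apply hS.norm_image_sub_le_of_norm_fderiv_le
      (fun x _ => (hdd.differentiable one_ne_zero).differentiableAt)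
      (fun x hx => by rw [norm_fderiv_fderiv]; exact hN x hx) hv hu
  calc ‖gradient d u - gradient d v‖
      = ‖(InnerProductSpace.toDual ℝ E).symm (fderiv ℝ d u - fderiv ℝ d v)‖ := by
        rw [map_sub]; rfl
    _ = ‖fderiv ℝ d u - fderiv ℝ d v‖ := LinearIsometryEquiv.norm_map _ _
    _ ≤ N * ‖u - v‖ := h1

lemma breg_nonneg {d : E → ℝ} {q σq : ℝ} (hq : 2 ≤ q) (hσq : 0 < σq)
    (hH2 : ∀ x y : E, σq / q * ‖x - y‖ ^ q ≤ breg d y x) (u v : E) :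
    0 ≤ breg d u v := by
  have hq0 : 0 < q := by linarith
  have := hH2 v u
  have h0 : (0:ℝ) ≤ σq / q * ‖v - u‖ ^ q :=
    mul_nonneg (div_nonneg hσq.le hq0.le) (Real.rpow_nonneg (norm_nonneg _) q)
  linarith

lemma step_exists [FiniteDimensional ℝ E] {g d : E → ℝ} (hdc : Continuous d)
    {q σq : ℝ} (hq : 2 ≤ q) (hσq : 0 < σq)
    (hH2 : ∀ x y : E, σq / q * ‖x - y‖ ^ q ≤ breg d y x)
    {L c : ℝ} (hL : 0 < L) (hLc : L ≤ c)
    (hH1 : ∀ x y : E, g x ≤ g y + ⟪gradient g y, x - y⟫_ℝ + L * breg d y x)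
    (yk : E) : ∃ w : E, stepOK g d c yk w := by
  have hc0 : 0 < c := lt_of_lt_of_le hL hLc
  set a := gradient g yk with ha
  set f : E → ℝ := fun z => ⟪a, z - yk⟫_ℝ + c * breg d yk z with hf
  have hcont : Continuous f := by
    apply Continuous.add
    · exact continuous_const.inner (continuous_id.sub continuous_const)
    · exact continuous_const.mul (((hdc.sub continuous_const).sub
        (continuous_const.inner (continuous_id.sub continuous_const))))
  set K := c * (σq / q) with hK
  have hK0 : 0 < K := mul_pos hc0 (div_pos hσq (by linarith))
  -- lower bound f z ≥ K * ‖z - yk‖^q - ‖a‖ * ‖z - yk‖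
  have hlow : ∀ z : E, K * ‖z - yk‖ ^ q - ‖a‖ * ‖z - yk‖ ≤ f z := by
    intro z
    have h1 : -(‖a‖ * ‖z - yk‖) ≤ ⟪a, z - yk⟫_ℝ :=
      neg_le_of_abs_le (abs_real_inner_le_norm a (z - yk))
    have h2 : K * ‖z - yk‖ ^ q ≤ c * breg d yk z := by
      rw [hK, mul_assoc]
      exact mul_le_mul_of_nonneg_left (hH2 z yk) hc0.le
    simp only [hf]; linarith
  -- the auxiliary scalar function tends to infinity
  have hpsi : Filter.Tendsto (fun t : ℝ => K * t ^ q - ‖a‖ * t) Filter.atTop Filter.atTop := by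
    apply Filter.tendsto_atTop_mono' _ _
      (Filter.tendsto_atTop_add_const_right _ (-‖a‖)
        (Filter.Tendsto.const_mul_atTop hK0 Filter.tendsto_id))
    filter_upwards [Filter.eventually_ge_atTop (max 1 (‖a‖ / K))] with t ht
    have ht1 : (1:ℝ) ≤ t := le_trans (le_max_left _ _) ht
    have ht2 : ‖a‖ / K ≤ t := le_trans (le_max_right _ _) ht
    have ht3 : ‖a‖ ≤ K * t := by
      rw [div_le_iff₀ hK0] at ht2; linarith [ht2]
    have htq : t ^ (2:ℝ) ≤ t ^ q := Real.rpow_le_rpow_of_exponent_le ht1 hq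
    have ht2' : t * t = t ^ (2:ℝ) := by
      rw [show (2:ℝ) = ((2:ℕ):ℝ) by norm_num, Real.rpow_natCast]; ring
    simp only [Filter.tendsto_id, id_eq]
    have h5 : K * (t * t) ≤ K * t ^ q := by
      rw [ht2']; exact mul_le_mul_of_nonneg_left htq hK0.le
    nlinarith [h5, mul_nonneg (sub_nonneg.mpr ht3) (sub_nonneg.mpr ht1)]
  have hnorm : Filter.Tendsto (fun z : E => ‖z - yk‖) (Filter.cocompact E) Filter.atTop := by
    apply Filter.tendsto_atTop_mono' _ _
      (Filter.tendsto_atTop_add_const_right _ (-‖yk‖) tendsto_norm_cocompact_atTop)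
    filter_upwards with z
    have := norm_sub_norm_le z yk
    linarith [norm_sub_norm_le (z) (yk)]
  have hflim : Filter.Tendsto f (Filter.cocompact E) Filter.atTop :=
    Filter.tendsto_atTop_mono hlow (hpsi.comp hnorm)
  obtain ⟨w, hw⟩ := hcont.exists_forall_le hflim
  refine ⟨w, hw, ?_⟩
  calc g w ≤ g yk + ⟪a, w - yk⟫_ℝ + L * breg d yk w := hH1 w yk
    _ ≤ g yk + ⟪a, w - yk⟫_ℝ + c * breg d yk w := by
        have := breg_nonneg hq hσq hH2 yk w
        nlinarith

end Aux

set_option maxHeartbeats 1000000 in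
/-- Corollary A.5. Under (H1)–(H3) and (H4) with `μ = 0` (convexity of `g`),
if `T = 3s` with `s ≥ 1`, Algorithm A satisfies
`min_{0≤k≤T−1} ‖∇g(y_k)‖ ≤ M·N·[q·β_d(y₀, y*)/σ_q]^{1/q}·(3/T)^{2/q}`, `M = max{2L₀, 4L}`. -/
theorem statement_15
    {E : Type*} [NormedAddCommGroup E] [InnerProductSpace ℝ E] [FiniteDimensional ℝ E]
    (d : E → ℝ) (hd : ConvexOn ℝ Set.univ d)
    (g : E → ℝ) (hg : Differentiable ℝ g)
    (L : ℝ) (hL : 0 < L)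
    (hH1 : ∀ x y : E, g x ≤ g y + ⟪gradient g y, x - y⟫_ℝ + L * breg d y x)
    (q σq : ℝ) (hq : 2 ≤ q) (hσq : 0 < σq)
    (hd2 : ContDiff ℝ 2 d)
    (hH2 : ∀ x y : E, σq / q * ‖x - y‖ ^ q ≤ breg d y x)
    (hH4 : ∀ x y : E, g y + ⟪gradient g y, x - y⟫_ℝ ≤ g x)
    (L0 : ℝ) (hL0 : 0 < L0)
    (y : ℕ → E) (Lk : ℕ → ℝ) (ik : ℕ → ℕ)
    (halg : algA g d L0 y Lk ik)
    (N : ℝ)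
    (hH3 : ∀ z ∈ convexHull ℝ {w : E | g w ≤ g (y 0)}, ‖iteratedFDeriv ℝ 2 d z‖ ≤ N)
    (ystar : E) (hmin : ∀ z : E, g ystar ≤ g z)
    (T s : ℕ) (hs : 1 ≤ s) (hT : T = 3 * s) :
    ∃ k < T, ‖gradient g (y k)‖ ≤
      max (2 * L0) (4 * L) * N * (q * breg d (y 0) ystar / σq) ^ (1 / q)
        * (3 / (T : ℝ)) ^ (2 / q) := by
  classical
  have hq0 : (0:ℝ) < q := by linarith
  have hd' : Differentiable ℝ d := hd2.differentiable (by norm_num)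
  have hdc : Continuous d := hd'.continuous
  set M : ℝ := max (2 * L0) (4 * L) with hM
  have hM1 : 2 * L0 ≤ M := le_max_left _ _
  have hM2 : 4 * L ≤ M := le_max_right _ _
  have hM0 : 0 < M := lt_of_lt_of_le (by linarith) hM1
  set c : ℕ → ℝ := fun k => (2:ℝ) ^ ik k * Lk k with hcdef
  have hstep : ∀ k, stepOK g d (c k) (y k) (y (k+1)) := fun k => (halg.2 k).1
  -- bound on the coefficient, by induction
  have hcbound : ∀ k, 0 < Lk k → Lk k ≤ M/2 → c k ≤ M/2 := by
    intro k hpos hle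
    rcases Nat.eq_zero_or_pos (ik k) with h0 | h1
    · simp only [hcdef, h0, pow_zero, one_mul]; exact hle
    · have hj := (halg.2 k).2.1 (ik k - 1) (Nat.sub_lt h1 one_pos)
      have hlt : (2:ℝ) ^ (ik k - 1) * Lk k < L := by
        by_contra hge
        push_neg at hge
        exact hj (step_exists hdc hq hσq hH2 hL hge hH1 (y k))
      have hpow : (2:ℝ) ^ ik k = 2 * (2:ℝ) ^ (ik k - 1) := by
        conv_lhs => rw [show ik k = (ik k - 1) + 1 from (Nat.succ_pred_eq_of_pos h1).symm]
        rw [pow_succ]; ring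
      have : c k < 2 * L := by
        simp only [hcdef, hpow]; nlinarith
      linarith
  have hLk : ∀ k, 0 < Lk k ∧ Lk k ≤ M/2 := by
    intro k
    induction k with
    | zero => exact ⟨halg.1 ▸ hL0, halg.1 ▸ by linarith⟩
    | succ n ih =>
      have hc0 : 0 < c n := mul_pos (pow_pos two_pos _) ih.1
      have hcle := hcbound n ih.1 ih.2
      have hrec := (halg.2 n).2.2
      constructor
      · rw [hrec]; positivity
      · rw [hrec]; show c n / 2 ≤ M / 2; linarith
  have hcpos : ∀ k, 0 < c k := fun k => mul_pos (pow_pos two_pos _) (hLk k).1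
  have hcle : ∀ k, c k ≤ M/2 := fun k => hcbound k (hLk k).1 (hLk k).2
  -- first-order condition
  have hfoc : ∀ k, gradient g (y k) = c k • (gradient d (y k) - gradient d (y (k+1))) :=
    fun k => stepOK_foc hd' (hcpos k).ne' (hstep k)
  -- inner product of gradient with the step
  have hinner : ∀ k, ⟪gradient g (y k), y (k+1) - y k⟫_ℝ
      = -(c k * (breg d (y k) (y (k+1)) + breg d (y (k+1)) (y k))) := by
    intro k
    rw [hfoc k, real_inner_smul_left]
    rw [show y (k+1) - y k = -(y k - y (k+1)) by abel, inner_neg_right,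
      breg_symm_sum d (y k) (y (k+1))]
    ring
  -- sufficient decrease
  have hdesc : ∀ k, g (y (k+1)) + c k * breg d (y (k+1)) (y k) ≤ g (y k) := by
    intro k
    have hacc := (hstep k).2
    rw [hinner k] at hacc
    linarith
  have hmono : ∀ k, g (y (k+1)) ≤ g (y k) := by
    intro k
    have := mul_nonneg (hcpos k).le (breg_nonneg hq hσq hH2 (y (k+1)) (y k))
    linarith [hdesc k]
  have hanti : Antitone (fun k => g (y k)) := antitone_nat_of_succ_le hmono
  -- membership in the convex hull of the sublevel set
  set S : Set E := convexHull ℝ {w : E | g w ≤ g (y 0)} with hSdef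
  have hmemS : ∀ k, y k ∈ S := fun k =>
    subset_convexHull ℝ _ (show g (y k) ≤ g (y 0) from hanti (Nat.zero_le k))
  have hgradlip : ∀ k, ‖gradient d (y k) - gradient d (y (k+1))‖ ≤ N * ‖y k - y (k+1)‖ :=
    fun k => grad_lip hd2 (convex_convexHull ℝ _) hH3 (hmemS k) (hmemS (k+1))
  have hN0 : 0 ≤ N := le_trans (norm_nonneg _) (hH3 (y 0) (hmemS 0))
  have hGnorm : ∀ k, ‖gradient g (y k)‖ ≤ c k * (N * ‖y (k+1) - y k‖) := by
    intro k
    rw [hfoc k, norm_smul, Real.norm_eq_abs, abs_of_pos (hcpos k), norm_sub_rev (y (k+1))]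
    exact mul_le_mul_of_nonneg_left (hgradlip k) (hcpos k).le
  -- convexity rate inequality
  have hrate : ∀ k, g (y (k+1)) - g ystar
      ≤ c k * (breg d (y k) ystar - breg d (y (k+1)) ystar) := by
    intro k
    have h3p := breg_three d (y k) (y (k+1)) ystar
    have hinner2 : ⟪gradient g (y k), ystar - y (k+1)⟫_ℝ
        = c k * ⟪gradient d (y k) - gradient d (y (k+1)), ystar - y (k+1)⟫_ℝ := by
      rw [hfoc k, real_inner_smul_left]
    have hconv := hH4 ystar (y k)
    have hacc := (hstep k).2
    have hsplit : ⟪gradient g (y k), y (k+1) - y k⟫_ℝ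
        = ⟪gradient g (y k), ystar - y k⟫_ℝ - ⟪gradient g (y k), ystar - y (k+1)⟫_ℝ := by
      simp only [inner_sub_right]; ring
    have hneg : ⟪gradient d (y (k+1)) - gradient d (y k), ystar - y (k+1)⟫_ℝ
        = -⟪gradient d (y k) - gradient d (y (k+1)), ystar - y (k+1)⟫_ℝ := by
      rw [show gradient d (y (k+1)) - gradient d (y k)
        = -(gradient d (y k) - gradient d (y (k+1))) by abel, inner_neg_left]
    rw [hneg] at h3p
    have hI : ⟪gradient d (y k) - gradient d (y (k+1)), ystar - y (k+1)⟫_ℝ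
        = breg d (y k) (y (k+1)) + breg d (y (k+1)) ystar - breg d (y k) ystar := by
      linarith [h3p]
    have hinner3 : ⟪gradient g (y k), ystar - y (k+1)⟫_ℝ
        = c k * breg d (y k) (y (k+1)) + c k * breg d (y (k+1)) ystar
          - c k * breg d (y k) ystar := by
      rw [hinner2, hI]; ring
    rw [mul_sub]
    linarith [hacc, hconv, hsplit, hinner3]
  have hβs_dec : ∀ k, breg d (y (k+1)) ystar ≤ breg d (y k) ystar := by
    intro k
    have h1 := hrate k
    have h2 := hmin (y (k+1))
    nlinarith [hcpos k]
  have hrate' : ∀ k, g (y (k+1)) - g ystar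
      ≤ M/2 * (breg d (y k) ystar - breg d (y (k+1)) ystar) := by
    intro k
    refine le_trans (hrate k) (mul_le_mul_of_nonneg_right (hcle k) ?_)
    linarith [hβs_dec k]
  set S0 : ℝ := breg d (y 0) ystar with hS0def
  have hS0 : 0 ≤ S0 := breg_nonneg hq hσq hH2 (y 0) ystar
  have hs1 : (1:ℝ) ≤ (s:ℝ) := by exact_mod_cast hs
  have hsp : (0:ℝ) < (s:ℝ) := by linarith
  -- Phase 1 : value gap at iterate 2s
  have hphase1 : (2*s : ℝ) * (g (y (2*s)) - g ystar) ≤ M/2 * S0 := by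
    have htel : ∑ k ∈ Finset.range (2*s),
        (breg d (y k) ystar - breg d (y (k+1)) ystar)
        = S0 - breg d (y (2*s)) ystar :=
      Finset.sum_range_sub' (fun k => breg d (y k) ystar) (2*s)
    have h1 : ∑ k ∈ Finset.range (2*s), (g (y (2*s)) - g ystar)
        ≤ ∑ k ∈ Finset.range (2*s), (g (y (k+1)) - g ystar) := by
      refine Finset.sum_le_sum fun k hk => ?_
      have : g (y (2*s)) ≤ g (y (k+1)) := hanti (Finset.mem_range.mp hk)
      linarith
    have h2 : ∑ k ∈ Finset.range (2*s), (g (y (k+1)) - g ystar)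
        ≤ ∑ k ∈ Finset.range (2*s),
          (M/2 * (breg d (y k) ystar - breg d (y (k+1)) ystar)) :=
      Finset.sum_le_sum fun k _ => hrate' k
    rw [Finset.sum_const, Finset.card_range] at h1
    rw [← Finset.mul_sum, htel] at h2
    have h3 : 0 ≤ breg d (y (2*s)) ystar := breg_nonneg hq hσq hH2 _ _
    have h4 : M/2 * (S0 - breg d (y (2*s)) ystar) ≤ M/2 * S0 := by nlinarith
    have h5 : (2*s : ℝ) * (g (y (2*s)) - g ystar)
        = (2*s) • (g (y (2*s)) - g ystar) := by
      rw [nsmul_eq_mul]; push_cast; ring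
    rw [h5]; push_cast at *; linarith
  -- Phase 2 : telescoping the sufficient decrease
  have hphase2 : ∑ k ∈ Finset.Ico (2*s) (3*s), c k * breg d (y (k+1)) (y k)
      ≤ g (y (2*s)) - g ystar := by
    have h1 : ∑ k ∈ Finset.Ico (2*s) (3*s), c k * breg d (y (k+1)) (y k)
        ≤ ∑ k ∈ Finset.Ico (2*s) (3*s), (g (y k) - g (y (k+1))) :=
      Finset.sum_le_sum fun k _ => by linarith [hdesc k]
    have h2 : ∑ k ∈ Finset.Ico (2*s) (3*s), (g (y k) - g (y (k+1)))
        = g (y (2*s)) - g (y (3*s)) := by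
      rw [Finset.sum_Ico_eq_sum_range, show 3*s - 2*s = s by omega,
        show 3*s = 2*s + s by omega]
      exact Finset.sum_range_sub' (fun i => g (y (2*s + i))) s
    have h3 := hmin (y (3*s))
    linarith [h1, h2.le, h2.ge]
  -- extract a good index in [2s, 3s)
  have hgap : g (y (2*s)) - g ystar ≤ M * S0 / (4*s) := by
    rw [le_div_iff₀ (by positivity : (0:ℝ) < 4*(s:ℝ))]
    nlinarith [hphase1]
  set B : ℝ := M * S0 / (4*(s:ℝ)^2) with hBdef
  have hexk : ∃ k, 2*s ≤ k ∧ k < 3*s ∧ c k * breg d (y (k+1)) (y k) ≤ B := by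
    by_contra hcon
    push_neg at hcon
    have hlt : ∀ k ∈ Finset.Ico (2*s) (3*s), B < c k * breg d (y (k+1)) (y k) := by
      intro k hk
      rw [Finset.mem_Ico] at hk
      exact hcon k hk.1 hk.2
    have hne : (Finset.Ico (2*s) (3*s)).Nonempty := by
      rw [Finset.nonempty_Ico]; omega
    have hsum : ∑ k ∈ Finset.Ico (2*s) (3*s), B
        < ∑ k ∈ Finset.Ico (2*s) (3*s), c k * breg d (y (k+1)) (y k) :=
      Finset.sum_lt_sum_of_nonempty hne hlt
    rw [Finset.sum_const, Nat.card_Ico, show 3*s - 2*s = s by omega, nsmul_eq_mul] at hsum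
    have : (s:ℝ) * B = M * S0 / (4*s) := by
      rw [hBdef]; field_simp
    rw [this] at hsum
    linarith [hphase2, hgap]
  obtain ⟨k, hk1, hk2, hkB⟩ := hexk
  refine ⟨k, by omega, ?_⟩
  -- final computation
  set β' : ℝ := breg d (y (k+1)) (y k) with hβ'def
  have hβ'0 : 0 ≤ β' := breg_nonneg hq hσq hH2 _ _
  set Δ : ℝ := ‖y (k+1) - y k‖ with hΔdef
  have hΔ0 : 0 ≤ Δ := norm_nonneg _
  have hΔq : Δ ^ q ≤ q / σq * β' := by
    have h1 := hH2 (y k) (y (k+1))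
    rw [norm_sub_rev, ← hΔdef] at h1
    rw [div_mul_eq_mul_div, le_div_iff₀ hσq]
    rw [div_mul_eq_mul_div, div_le_iff₀ hq0] at h1
    nlinarith [h1]
  have hckM : c k ≤ M := by linarith [hcle k, hM0]
  -- core power inequality
  have hcore : (c k) ^ q * (q / σq * β') ≤ M ^ q * (q * S0 / σq * (1/(s:ℝ)^2)) := by
    have e1 : (c k) ^ q = (c k) ^ (q-1) * c k := by
      conv_lhs => rw [show q = (q-1)+1 by ring, Real.rpow_add_one (hcpos k).ne']
    have e2 : M ^ q = M ^ (q-1) * M := by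
      conv_lhs => rw [show q = (q-1)+1 by ring, Real.rpow_add_one hM0.ne']
    have e3 : (c k) ^ (q-1) ≤ M ^ (q-1) :=
      Real.rpow_le_rpow (hcpos k).le hckM (by linarith)
    have e4 : (0:ℝ) ≤ (c k) ^ (q-1) := Real.rpow_nonneg (hcpos k).le _
    have e5 : (0:ℝ) ≤ M ^ (q-1) := Real.rpow_nonneg hM0.le _
    have e6 : c k * β' ≤ M * S0 / (4*(s:ℝ)^2) := hkB
    calc (c k) ^ q * (q / σq * β') = (q/σq) * ((c k) ^ (q-1) * (c k * β')) := by
          rw [e1]; ring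
      _ ≤ (q/σq) * (M ^ (q-1) * (M * S0 / (4*(s:ℝ)^2))) := by
          have h7 : 0 ≤ c k * β' := mul_nonneg (hcpos k).le hβ'0
          have h8 : (c k) ^ (q-1) * (c k * β') ≤ M ^ (q-1) * (M * S0 / (4*(s:ℝ)^2)) :=
            mul_le_mul e3 e6 h7 e5
          have h9 : 0 ≤ q/σq := div_nonneg hq0.le hσq.le
          exact mul_le_mul_of_nonneg_left h8 h9
      _ ≤ M ^ q * (q * S0 / σq * (1/(s:ℝ)^2)) := by
          rw [e2]
          have : (q/σq) * (M ^ (q-1) * (M * S0 / (4*(s:ℝ)^2)))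
              = (M ^ (q-1) * M) * (q * S0 / σq * (1/(s:ℝ)^2)) / 4 := by
            field_simp
          rw [this]
          have h10 : 0 ≤ (M ^ (q-1) * M) * (q * S0 / σq * (1/(s:ℝ)^2)) := by positivity
          linarith
  -- convert to norms via rpow
  have hq' : (0:ℝ) < 1/q := by positivity
  have hG : ‖gradient g (y k)‖ ≤ c k * N * Δ := by
    have := hGnorm k
    rw [← hΔdef] at this
    linarith [this]
  have hΔle : Δ ≤ (q / σq * β') ^ (1/q) := by
    have h1 : Δ = (Δ ^ q) ^ (1/q) := by
      rw [← Real.rpow_mul hΔ0, mul_one_div, div_self hq0.ne', Real.rpow_one]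
    rw [h1]
    exact Real.rpow_le_rpow (Real.rpow_nonneg hΔ0 q) hΔq hq'.le
  have hfin1 : ‖gradient g (y k)‖ ≤ N * ((c k) ^ q * (q / σq * β')) ^ (1/q) := by
    have h1 : c k * N * Δ ≤ c k * N * ((q / σq * β') ^ (1/q)) :=
      mul_le_mul_of_nonneg_left hΔle (mul_nonneg (hcpos k).le hN0)
    have h2 : c k = ((c k) ^ q) ^ (1/q) := by
      rw [← Real.rpow_mul (hcpos k).le, mul_one_div, div_self hq0.ne', Real.rpow_one]
    have h3 : c k * N * ((q / σq * β') ^ (1/q))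
        = N * (((c k) ^ q) ^ (1/q) * ((q / σq * β') ^ (1/q))) := by
      rw [← h2]; ring
    rw [← Real.mul_rpow (Real.rpow_nonneg (hcpos k).le _)
      (mul_nonneg (div_nonneg hq0.le hσq.le) hβ'0)] at h3
    linarith [hG, h1, h3.le, h3.ge]
  have hfin2 : N * ((c k) ^ q * (q / σq * β')) ^ (1/q)
      ≤ N * (M ^ q * (q * S0 / σq * (1/(s:ℝ)^2))) ^ (1/q) := by
    refine mul_le_mul_of_nonneg_left ?_ hN0
    exact Real.rpow_le_rpow (mul_nonneg (Real.rpow_nonneg (hcpos k).le _)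
      (mul_nonneg (div_nonneg hq0.le hσq.le) hβ'0)) hcore hq'.le
  -- identify the right-hand side
  have hTs : (T:ℝ) = 3 * s := by rw [hT]; push_cast; ring
  have h3T : (3:ℝ) / (T:ℝ) = 1 / (s:ℝ) := by
    rw [hTs]; field_simp
  have hRHS : M * N * (q * S0 / σq) ^ (1/q) * (3/(T:ℝ)) ^ (2/q)
      = N * (M ^ q * (q * S0 / σq * (1/(s:ℝ)^2))) ^ (1/q) := by
    rw [h3T]
    have e1 : ((1:ℝ)/(s:ℝ)) ^ ((2:ℝ)/q) = (((1:ℝ)/(s:ℝ)^2)) ^ ((1:ℝ)/q) := by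
      rw [show (2:ℝ)/q = 2 * (1/q) by ring, Real.rpow_mul (by positivity),
        show ((1:ℝ)/(s:ℝ)) ^ (2:ℝ) = 1/(s:ℝ)^2 by
          rw [show (2:ℝ) = ((2:ℕ):ℝ) by norm_num, Real.rpow_natCast]; field_simp]
    rw [e1]
    have e3 : (q * S0 / σq) ^ ((1:ℝ)/q) * ((1:ℝ)/(s:ℝ)^2) ^ ((1:ℝ)/q)
        = (q * S0 / σq * ((1:ℝ)/(s:ℝ)^2)) ^ ((1:ℝ)/q) :=
      (Real.mul_rpow (div_nonneg (mul_nonneg hq0.le hS0) hσq.le) (by positivity)).symm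
    have e2 : (M ^ q) ^ ((1:ℝ)/q) = M := by
      rw [← Real.rpow_mul hM0.le, mul_one_div, div_self hq0.ne', Real.rpow_one]
    have e4 : (M ^ q) ^ ((1:ℝ)/q) * (q * S0 / σq * (1/(s:ℝ)^2)) ^ ((1:ℝ)/q)
        = (M ^ q * (q * S0 / σq * (1/(s:ℝ)^2))) ^ ((1:ℝ)/q) :=
      (Real.mul_rpow (Real.rpow_nonneg hM0.le _)
        (mul_nonneg (div_nonneg (mul_nonneg hq0.le hS0) hσq.le) (by positivity))).symm
    calc M * N * (q * S0 / σq) ^ ((1:ℝ)/q) * ((1:ℝ)/(s:ℝ)^2) ^ ((1:ℝ)/q)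
        = N * ((q * S0 / σq) ^ ((1:ℝ)/q) * ((1:ℝ)/(s:ℝ)^2) ^ ((1:ℝ)/q)) * M := by ring
      _ = N * (q * S0 / σq * (1/(s:ℝ)^2)) ^ ((1:ℝ)/q) * ((M ^ q) ^ ((1:ℝ)/q)) := by
          rw [e3, e2]
      _ = N * (M ^ q * (q * S0 / σq * (1/(s:ℝ)^2))) ^ ((1:ℝ)/q) := by rw [← e4]; ring
  rw [hRHS]
  exact le_trans hfin1 hfin2
end

section
/- Suppose (H1) holds and let {y_k} be generated by Algorithm B. Then for all k ≥ 0, g̃(y_k) − g̃(y_{k+1}) ≥ L·β_d(y_k, y_{k+1}), where g̃ = g + φ. -/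
open scoped InnerProductSpace

/-- Lemma A.7. Under (H1), Algorithm B (Bregman proximal gradient on the
composite objective `g̃ = g + φ`) satisfies `g̃(y_k) − g̃(y_{k+1}) ≥ L·β_d(y_k, y_{k+1})`,
i.e. `g̃(y_{k+1}) + L·β_d(y_k, y_{k+1}) ≤ g̃(y_k)`, for all `k ≥ 0`. -/
theorem statement_17
    {E : Type*} [NormedAddCommGroup E] [InnerProductSpace ℝ E] [FiniteDimensional ℝ E]
    (d : E → ℝ) (hd : ConvexOn ℝ Set.univ d) (hd' : Differentiable ℝ d)
    (g : E → ℝ) (hg : Differentiable ℝ g)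
    (L : ℝ) (hL : 0 < L)
    (hH1 : ∀ x y : E, g x ≤ g y + ⟪gradient g y, x - y⟫_ℝ + L * breg d y x)
    (φ : E → EReal)
    (hφbot : ∀ z : E, φ z ≠ ⊥) (hφtop : ∃ z : E, φ z ≠ ⊤)
    (hφclosed : LowerSemicontinuous φ)
    (hφconv : ∀ u v : E, ∀ a b : ℝ, 0 < a → 0 < b → a + b = 1 →
      φ (a • u + b • v) ≤ (a : EReal) * φ u + (b : EReal) * φ v)
    (y : ℕ → E) (hy0 : φ (y 0) ≠ ⊤)
    (halg : ∀ k : ℕ, φ (y (k + 1)) ≠ ⊤ ∧ ∀ z : E,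
      ((⟪gradient g (y k), y (k + 1) - y k⟫_ℝ
          + 2 * L * breg d (y k) (y (k + 1)) : ℝ) : EReal) + φ (y (k + 1))
        ≤ ((⟪gradient g (y k), z - y k⟫_ℝ + 2 * L * breg d (y k) z : ℝ) : EReal) + φ z) :
    ∀ k : ℕ,
      ((g (y (k + 1)) : ℝ) : EReal) + φ (y (k + 1))
          + ((L * breg d (y k) (y (k + 1)) : ℝ) : EReal)
        ≤ ((g (y k) : ℝ) : EReal) + φ (y k) := by
  intro k
  obtain ⟨htop, hmin⟩ := halg k
  -- φ (y (k+1)) is a real number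
  obtain ⟨r, hr⟩ : ∃ r : ℝ, φ (y (k + 1)) = (r : EReal) := by
    lift φ (y (k + 1)) to ℝ using ⟨htop, hφbot _⟩ with r
    exact ⟨r, rfl⟩
  have hself := hmin (y k)
  have hbreg0 : breg d (y k) (y k) = 0 := by
    simp [breg]
  rw [hbreg0, hr] at hself
  simp only [sub_self, inner_zero_right, mul_zero, add_zero, EReal.coe_zero, zero_add] at hself
  -- hself : ((⟪..⟫ + 2L*β : ℝ) : EReal) + r ≤ φ (y k)
  set c := ⟪gradient g (y k), y (k + 1) - y k⟫_ℝ + 2 * L * breg d (y k) (y (k + 1)) with hc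
  have hreal : g (y (k + 1)) + r + L * breg d (y k) (y (k + 1)) ≤ g (y k) + (c + r) := by
    have := hH1 (y (k + 1)) (y k)
    nlinarith [this]
  rw [hr]
  calc ((g (y (k + 1)) : ℝ) : EReal) + (r : EReal) + ((L * breg d (y k) (y (k + 1)) : ℝ) : EReal)
      = ((g (y (k + 1)) + r + L * breg d (y k) (y (k + 1)) : ℝ) : EReal) := by
        norm_cast
    _ ≤ ((g (y k) + (c + r) : ℝ) : EReal) := by exact_mod_cast hreal
    _ = ((g (y k) : ℝ) : EReal) + (((c + r : ℝ)) : EReal) := by norm_cast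
    _ ≤ ((g (y k) : ℝ) : EReal) + φ (y k) := by
        apply add_le_add_right
        rw [EReal.coe_add]
        exact hself
end
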